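/- arXiv:2005.04575 — 5 statements merged into one kernel-verified Lean document; each statement's English description precedes it below -/
import Mathlib

section
/- Let (ξ_i, 𝔉_i) be square-integrable martingale differences, S_n = Σ ξ_i, B_n(y) = Σ ξ_i² 1_{ξ_i > y} + Σ E[ξ_i² 1_{ξ_i ≤ y} | 𝔉_{i-1}]. Then for all b > 0, M ≥ 1, x > 0 and y ≥ 0, P(S_n ≥ x √(B_n(y)), b ≤ √(B_n(y)) ≤ bM) ≤ √e (1 + 2(1+x) ln M) exp{- x² / (2(1 + xy/(3b)))}. -/
open MeasureTheory Real Finset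


lemma auxB {u : ℝ} (hu : u ≤ 0) : Real.exp u ≤ 1 + u + u^2/2 := by
  have hanti : Antitone (fun u : ℝ => 1 + u + u^2/2 - Real.exp u) := by
    apply antitone_of_deriv_nonpos
    · fun_prop
    · intro v
      have h : HasDerivAt (fun u : ℝ => 1 + u + u^2/2 - Real.exp u)
          (0 + 1 + (2 * v ^ (2-1))/2 - Real.exp v) v := by
        exact (((hasDerivAt_const v (1:ℝ)).add (hasDerivAt_id v)).add
          ((hasDerivAt_pow 2 v).div_const 2)).sub (Real.hasDerivAt_exp v)
      rw [h.deriv]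
      have := Real.add_one_le_exp v
      norm_num
      linarith
  have h0 := hanti hu
  simp at h0
  linarith

lemma auxA {u : ℝ} (hu : 0 ≤ u) : (Real.exp u - 1 - u) * (3 - u) ≤ 3*u^2/2 := by
  set φ' : ℝ → ℝ := fun u => 2*u - (Real.exp u - 1)*(2 - u) with hφ'
  have hmono : Monotone φ' := by
    apply monotone_of_deriv_nonneg
    · fun_prop
    · intro v
      have h := ((hasDerivAt_id v).const_mul (2:ℝ)).sub
          (((Real.hasDerivAt_exp v).sub (hasDerivAt_const v 1)).mul
            ((hasDerivAt_const v (2:ℝ)).sub (hasDerivAt_id v)))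
      simp only [id_eq] at h
      rw [hφ', show deriv (fun u : ℝ => 2*u - (Real.exp u - 1)*(2 - u)) v = 2 * 1 - ((Real.exp v - 0) * (2 - v) + (Real.exp v - 1) * (0 - 1)) from h.deriv]
      have h2 : (1 - v) * Real.exp v ≤ 1 := by
        have h3 := Real.add_one_le_exp (-v)
        have h4 : (-v + 1) * Real.exp v ≤ Real.exp (-v) * Real.exp v :=
          mul_le_mul_of_nonneg_right h3 (Real.exp_pos v).le
        rw [← Real.exp_add] at h4
        simp at h4
        linarith
      nlinarith
  have hφ'0 : ∀ v, 0 ≤ v → 0 ≤ φ' v := by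
    intro v hv
    have := hmono hv
    simp [hφ'] at this ⊢
    linarith
  have hmono2 : MonotoneOn (fun u : ℝ => 3*u^2/2 - (Real.exp u - 1 - u)*(3 - u)) (Set.Ici 0) := by
    apply monotoneOn_of_deriv_nonneg (convex_Ici 0)
    · fun_prop
    · intro v hv
      exact (by fun_prop : Differentiable ℝ (fun u : ℝ => 3*u^2/2 - (Real.exp u - 1 - u)*(3 - u))).differentiableAt.differentiableWithinAt
    · intro v hv
      rw [interior_Ici] at hv
      have h : HasDerivAt (fun u : ℝ => 3*u^2/2 - (Real.exp u - 1 - u)*(3 - u))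
          ((3 * (2 * v ^ (2-1)))/2 - ((Real.exp v - 0 - 1) * (3 - v) + (Real.exp v - 1 - v) * (0 - 1))) v := by
        exact (((hasDerivAt_pow 2 v).const_mul 3).div_const 2).sub
          ((((Real.hasDerivAt_exp v).sub (hasDerivAt_const v 1)).sub (hasDerivAt_id v)).mul
            ((hasDerivAt_const v (3:ℝ)).sub (hasDerivAt_id v)))
      rw [h.deriv]
      have := hφ'0 v (le_of_lt hv)
      simp [hφ'] at this ⊢
      nlinarith
  have h0 := hmono2 (Set.self_mem_Ici) (Set.mem_Ici.2 hu) hu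
  simp at h0
  nlinarith

lemma auxC {s : ℝ} (hs : 0 ≤ s) : Real.exp (s - s^2/2) ≤ 1 + s := by
  have hmono : Monotone (fun s : ℝ => (1+s) * Real.exp (s^2/2 - s)) := by
    apply monotone_of_deriv_nonneg
    · fun_prop
    · intro v
      have he : HasDerivAt (fun s : ℝ => Real.exp (s^2/2 - s)) (Real.exp (v^2/2 - v) * ((2 * v ^ (2-1))/2 - 1)) v := by
        exact (((hasDerivAt_pow 2 v).div_const 2).sub (hasDerivAt_id v)).exp
      have h : HasDerivAt (fun s : ℝ => (1+s) * Real.exp (s^2/2 - s))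
          ((0 + 1) * Real.exp (v^2/2 - v) + (1+v) * (Real.exp (v^2/2 - v) * ((2 * v ^ (2-1))/2 - 1))) v :=
        ((hasDerivAt_const v (1:ℝ)).add (hasDerivAt_id v)).mul he
      rw [h.deriv]
      have := Real.exp_pos (v^2/2 - v)
      norm_num
      nlinarith
  have h0 := hmono hs
  simp at h0
  have hp := Real.exp_pos (s - s^2/2)
  have key : Real.exp (s - s^2/2) * ((1+s) * Real.exp (s^2/2 - s)) = 1 + s := by
    rw [show Real.exp (s - s^2/2) * ((1+s) * Real.exp (s^2/2 - s)) = (1+s) * (Real.exp (s - s^2/2) * Real.exp (s^2/2 - s)) by ring, ← Real.exp_add]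
    norm_num
  nlinarith



lemma auxPT {l y c : ℝ} (hl : 0 ≤ l) (hy : 0 ≤ y) (hly : l*y < 3)
    (hc : 3*l^2 ≤ 2*c*(3 - l*y)) (u : ℝ) :
    Real.exp (l*u - (if y < u then c*u^2 else 0)) ≤ 1 + l*u + (if u ≤ y then c*u^2 else 0) := by
  have hc0 : 0 ≤ c := by nlinarith [sq_nonneg l]
  have hcl : l^2/2 ≤ c := by nlinarith [mul_nonneg hl hy]
  by_cases huy : u ≤ y
  · rw [if_neg (not_lt.2 huy), if_pos huy]
    simp only [sub_zero]
    by_cases hu0 : u ≤ 0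
    · have h1 := auxB (u := l*u) (mul_nonpos_of_nonneg_of_nonpos hl hu0)
      have : (l*u)^2/2 ≤ c*u^2 := by nlinarith [sq_nonneg u]
      linarith
    · push_neg at hu0
      have hs : 0 ≤ l*u := mul_nonneg hl hu0.le
      have h1 := auxA hs
      have h2 : 3 - l*u > 0 := by nlinarith
      have h3 : Real.exp (l*u) - 1 - l*u ≤ c*u^2 := by
        have h4 : l*u ≤ l*y := mul_le_mul_of_nonneg_left huy hl
        nlinarith [sq_nonneg u, mul_nonneg (mul_nonneg hc0 (sq_nonneg u)) (sub_nonneg.2 h4)]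
      linarith
  · push_neg at huy
    rw [if_pos huy, if_neg (not_le.2 huy), add_zero]
    have hu0 : 0 < u := lt_of_le_of_lt hy huy
    have hs : 0 ≤ l*u := mul_nonneg hl hu0.le
    have h1 := auxC hs
    have h2 : l*u - c*u^2 ≤ l*u - (l*u)^2/2 := by nlinarith [sq_nonneg u]
    calc Real.exp (l*u - c*u^2) ≤ Real.exp (l*u - (l*u)^2/2) := Real.exp_le_exp.2 h2
      _ ≤ 1 + l*u := auxC hs

lemma auxGbd {l y c : ℝ} (hl : 0 ≤ l) (hy : 0 ≤ y) (hly : l*y < 3) (hc : 3*l^2 ≤ 2*c*(3 - l*y)) (u : ℝ) :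
    Real.exp (l*u - (if y < u then c*u^2 else 0)) ≤ max (Real.exp (l*y)) (Real.exp (l^2/(4*c))) := by
  have hc0 : 0 ≤ c := by nlinarith [sq_nonneg l]
  by_cases huy : u ≤ y
  · rw [if_neg (not_lt.2 huy)]
    refine le_max_of_le_left ?_
    simp only [sub_zero]
    exact Real.exp_le_exp.2 (mul_le_mul_of_nonneg_left huy hl)
  · push_neg at huy
    rw [if_pos huy]
    refine le_max_of_le_right ?_
    apply Real.exp_le_exp.2
    rcases eq_or_lt_of_le hc0 with h|h
    · have hl0 : l = 0 := by nlinarith [mul_nonneg hl hy]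
      simp [hl0, ← h]
    · rw [le_div_iff₀ (by positivity : (0:ℝ) < 4*c)]
      nlinarith [sq_nonneg (l - 2*c*u)]

lemma auxChord {a c p q r : ℝ} (hc : 0 ≤ c) (hpr : p ≤ r) (hrq : r ≤ q) :
    min (a*p - c*p^2) (a*q - c*q^2) ≤ a*r - c*r^2 := by
  have h1 : (0:ℝ) ≤ r - p := sub_nonneg.2 hpr
  have h2 : (0:ℝ) ≤ q - r := sub_nonneg.2 hrq
  have h3 : (0:ℝ) ≤ q - p := by linarith
  have h4 : 0 ≤ c * (r-p) * (q-r) * (q-p) :=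
    mul_nonneg (mul_nonneg (mul_nonneg hc h1) h2) h3
  rcases eq_or_lt_of_le h3 with he|hlt
  · have hr : r = p := by apply le_antisymm _ hpr; linarith
    rw [hr]; exact min_le_left _ _
  rcases min_cases (a*p - c*p^2) (a*q - c*q^2) with ⟨h,h'⟩|⟨h,h'⟩ <;> rw [h] <;> by_contra hneg <;> push_neg at hneg
  · have key : (a*r - c*r^2 - (a*p - c*p^2))*(q-p)
        = (r-p)*((a*q - c*q^2) - (a*p - c*p^2)) + c*(r-p)*(q-r)*(q-p) := by ring
    have hR : 0 ≤ (a*r - c*r^2 - (a*p - c*p^2))*(q-p) := by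
      rw [key]; have := mul_nonneg h1 (sub_nonneg.2 h'); linarith
    nlinarith
  · have key : (a*r - c*r^2 - (a*q - c*q^2))*(q-p)
        = (q-r)*((a*p - c*p^2) - (a*q - c*q^2)) + c*(r-p)*(q-r)*(q-p) := by ring
    have hR : 0 ≤ (a*r - c*r^2 - (a*q - c*q^2))*(q-p) := by
      rw [key]; have := mul_nonneg h2 (sub_nonneg.2 h'.le); linarith
    nlinarith

lemma Icc1succ (n : ℕ) : Finset.Icc 1 (n+1) = insert (n+1) (Finset.Icc 1 n) := by
  ext i; simp [Finset.mem_Icc]; omega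

lemma auxSM {Ω : Type*} {m : MeasurableSpace Ω} {μ : Measure Ω} [IsProbabilityMeasure μ]
    (𝔉 : ℕ → MeasurableSpace Ω) (hle : ∀ i, 𝔉 i ≤ m) (hmono : Monotone 𝔉)
    (ξ : ℕ → Ω → ℝ)
    (hadp : ∀ i, StronglyMeasurable[𝔉 i] (ξ i))
    (hsq : ∀ i, Integrable (fun ω => (ξ i ω) ^ 2) μ)
    (hmart : ∀ i : ℕ, 1 ≤ i → μ[ξ i | 𝔉 (i - 1)] =ᵐ[μ] 0)
    {l y c : ℝ} (hl : 0 ≤ l) (hy : 0 ≤ y) (hly : l*y < 3) (hc : 3*l^2 ≤ 2*c*(3 - l*y))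
    (n : ℕ) :
    Integrable (fun ω => Real.exp (l * (∑ i ∈ Finset.Icc 1 n, ξ i ω)
      - c * ((∑ i ∈ Finset.Icc 1 n, if y < ξ i ω then (ξ i ω)^2 else 0)
        + ∑ i ∈ Finset.Icc 1 n, (μ[fun ω' => if ξ i ω' ≤ y then (ξ i ω')^2 else 0 | 𝔉 (i-1)]) ω))) μ
    ∧ ∫ ω, Real.exp (l * (∑ i ∈ Finset.Icc 1 n, ξ i ω)
      - c * ((∑ i ∈ Finset.Icc 1 n, if y < ξ i ω then (ξ i ω)^2 else 0)
        + ∑ i ∈ Finset.Icc 1 n, (μ[fun ω' => if ξ i ω' ≤ y then (ξ i ω')^2 else 0 | 𝔉 (i-1)]) ω)) ∂μ ≤ 1 := by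
  have hc0 : 0 ≤ c := by nlinarith [sq_nonneg l, mul_nonneg hl hy]
  -- notation
  set D : ℕ → Ω → ℝ := fun i => μ[fun ω' => if ξ i ω' ≤ y then (ξ i ω')^2 else 0 | 𝔉 (i-1)] with hD
  set g : ℕ → Ω → ℝ := fun i ω => Real.exp (l * ξ i ω - (if y < ξ i ω then c*(ξ i ω)^2 else 0)) with hg
  set Z : ℕ → Ω → ℝ := fun k ω => Real.exp (l * (∑ i ∈ Finset.Icc 1 k, ξ i ω)
      - c * ((∑ i ∈ Finset.Icc 1 k, if y < ξ i ω then (ξ i ω)^2 else 0)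
        + ∑ i ∈ Finset.Icc 1 k, D i ω)) with hZ
  show Integrable (Z n) μ ∧ ∫ ω, Z n ω ∂μ ≤ 1
  set Cg : ℝ := max (Real.exp (l*y)) (Real.exp (l^2/(4*c))) with hCg
  have hCg0 : 0 ≤ Cg := le_trans (Real.exp_pos _).le (le_max_left _ _)
  -- measurability of ξ wrt m
  have sξ : ∀ i, StronglyMeasurable[m] (ξ i) := fun i => (hadp i).mono (hle i)
  -- measurability of the truncated squares
  have hite1 : ∀ i, StronglyMeasurable[𝔉 i] (fun ω => if y < ξ i ω then (ξ i ω)^2 else 0) := by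
    intro i
    exact (Measurable.ite (measurableSet_lt measurable_const (hadp i).measurable)
      ((hadp i).measurable.pow_const 2) measurable_const).stronglyMeasurable
  have hite2 : ∀ i, StronglyMeasurable[𝔉 i] (fun ω => if ξ i ω ≤ y then (ξ i ω)^2 else 0) := by
    intro i
    exact (Measurable.ite (measurableSet_le (hadp i).measurable measurable_const)
      ((hadp i).measurable.pow_const 2) measurable_const).stronglyMeasurable
  -- integrability of basic pieces
  have hξint : ∀ i, Integrable (ξ i) μ := by
    intro i
    refine Integrable.mono' ((hsq i).add (integrable_const 1)) (sξ i).aestronglyMeasurable ?_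
    refine Filter.Eventually.of_forall fun ω => ?_
    have := abs_nonneg (ξ i ω)
    rw [Real.norm_eq_abs]
    simp only [Pi.add_apply]
    nlinarith [sq_abs (ξ i ω)]
  have hite2int : ∀ i, Integrable (fun ω => if ξ i ω ≤ y then (ξ i ω)^2 else 0) μ := by
    intro i
    refine Integrable.mono' (hsq i) ((hite2 i).mono (hle i)).aestronglyMeasurable ?_
    refine Filter.Eventually.of_forall fun ω => ?_
    rw [Real.norm_eq_abs]
    split <;> simp [sq_nonneg, abs_of_nonneg (sq_nonneg (ξ i ω))]
  -- D facts
  have hDsm : ∀ i, StronglyMeasurable[𝔉 (i-1)] (D i) := fun i => stronglyMeasurable_condExp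
  have hDnn : ∀ᵐ ω ∂μ, ∀ i, 0 ≤ D i ω := by
    rw [ae_all_iff]
    intro i
    exact condExp_nonneg (Filter.Eventually.of_forall fun ω => by positivity)
  -- g facts
  have hgpos : ∀ i ω, 0 < g i ω := fun i ω => Real.exp_pos _
  have hgbd : ∀ i ω, g i ω ≤ Cg := by
    intro i ω
    exact auxGbd hl hy hly hc (ξ i ω)
  have hgsm : ∀ i, StronglyMeasurable[𝔉 i] (g i) := by
    intro i
    apply Continuous.comp_stronglyMeasurable Real.continuous_exp
    apply StronglyMeasurable.sub ((hadp i).const_mul l)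
    exact (Measurable.ite (measurableSet_lt measurable_const (hadp i).measurable)
      (((hadp i).measurable.pow_const 2).const_mul c) measurable_const).stronglyMeasurable
  have hgint : ∀ i, Integrable (g i) μ := by
    intro i
    refine Integrable.mono' (integrable_const Cg) ((hgsm i).mono (hle i)).aestronglyMeasurable ?_
    exact Filter.Eventually.of_forall fun ω => by
      rw [Real.norm_eq_abs, abs_of_pos (hgpos i ω)]; exact hgbd i ω
  -- Z facts
  have hZsm : ∀ k, StronglyMeasurable[𝔉 k] (Z k) := by
    intro k
    apply Continuous.comp_stronglyMeasurable Real.continuous_exp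
    apply StronglyMeasurable.sub
    · apply StronglyMeasurable.const_mul
      refine Finset.stronglyMeasurable_fun_sum _ fun i hi => ?_
      exact (hadp i).mono (hmono (Finset.mem_Icc.1 hi).2)
    · apply StronglyMeasurable.const_mul
      apply StronglyMeasurable.add
      · refine Finset.stronglyMeasurable_fun_sum _ fun i hi => ?_
        exact (hite1 i).mono (hmono (Finset.mem_Icc.1 hi).2)
      · refine Finset.stronglyMeasurable_fun_sum _ fun i hi => ?_
        have hik := (Finset.mem_Icc.1 hi).2
        exact (hDsm i).mono (hmono (by omega : i - 1 ≤ k))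
  have hZfac : ∀ k ω, Z k ω = ∏ i ∈ Finset.Icc 1 k, (g i ω * Real.exp (-(c * D i ω))) := by
    intro k ω
    have e : (l * (∑ i ∈ Finset.Icc 1 k, ξ i ω)
        - c * ((∑ i ∈ Finset.Icc 1 k, if y < ξ i ω then (ξ i ω)^2 else 0)
          + ∑ i ∈ Finset.Icc 1 k, D i ω))
        = ∑ i ∈ Finset.Icc 1 k,
            ((l * ξ i ω - (if y < ξ i ω then c*(ξ i ω)^2 else 0)) + (-(c * D i ω))) := by
      have e1 : ∀ i ∈ Finset.Icc 1 k,
          (l * ξ i ω - (if y < ξ i ω then c*(ξ i ω)^2 else 0)) + (-(c * D i ω))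
          = l * ξ i ω - c * (if y < ξ i ω then (ξ i ω)^2 else 0) - c * D i ω := by
        intro i _
        rw [mul_ite, mul_zero]
        ring
      rw [Finset.sum_congr rfl e1, Finset.sum_sub_distrib, Finset.sum_sub_distrib,
        ← Finset.mul_sum, ← Finset.mul_sum, ← Finset.mul_sum]
      ring
    show Real.exp _ = _
    rw [e, Real.exp_sum]
    exact Finset.prod_congr rfl fun i _ => Real.exp_add _ _
  have hZbd : ∀ k, ∀ᵐ ω ∂μ, Z k ω ≤ Cg ^ k := by
    intro k
    filter_upwards [hDnn] with ω hω
    rw [hZfac k ω]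
    calc ∏ i ∈ Finset.Icc 1 k, (g i ω * Real.exp (-(c * D i ω)))
        ≤ ∏ i ∈ Finset.Icc 1 k, Cg := by
          apply Finset.prod_le_prod
          · intro i _; positivity
          · intro i _
            have h1 : Real.exp (-(c * D i ω)) ≤ 1 := by
              rw [Real.exp_le_one_iff]
              have := mul_nonneg hc0 (hω i); linarith
            calc g i ω * Real.exp (-(c * D i ω)) ≤ g i ω * 1 :=
                  mul_le_mul_of_nonneg_left h1 (hgpos i ω).le
              _ = g i ω := mul_one _
              _ ≤ Cg := hgbd i ω
      _ = Cg ^ k := by rw [Finset.prod_const, Nat.card_Icc]; norm_num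
  have hZpos : ∀ k ω, 0 < Z k ω := fun k ω => Real.exp_pos _
  have hZint : ∀ k, Integrable (Z k) μ := by
    intro k
    refine Integrable.mono' (integrable_const (Cg ^ k)) (((hZsm k).mono (hle k)).aestronglyMeasurable) ?_
    filter_upwards [hZbd k] with ω hω
    rw [Real.norm_eq_abs, abs_of_pos (hZpos k ω)]; exact hω
  -- main induction
  induction n with
  | zero =>
    constructor
    · simpa using hZint 0
    · simp only [hZ]
      simp
  | succ n ih =>
    obtain ⟨_, ihint⟩ := ih
    -- F
    set F : Ω → ℝ := fun ω => Z n ω * Real.exp (-(c * D (n+1) ω)) with hF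
    have hFsm : StronglyMeasurable[𝔉 n] F := by
      apply StronglyMeasurable.mul ((hZsm n))
      apply Continuous.comp_stronglyMeasurable Real.continuous_exp
      have : StronglyMeasurable[𝔉 n] (D (n+1)) := by
        have := hDsm (n+1); simpa using this
      exact (this.const_mul c).neg
    have hFpos : ∀ ω, 0 < F ω := fun ω => mul_pos (hZpos n ω) (Real.exp_pos _)
    have hFbd : ∀ᵐ ω ∂μ, F ω ≤ Cg ^ n := by
      filter_upwards [hZbd n, hDnn] with ω h1 h2
      have h3 : Real.exp (-(c * D (n+1) ω)) ≤ 1 := by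
        rw [Real.exp_le_one_iff]
        have := mul_nonneg hc0 (h2 (n+1)); linarith
      calc F ω ≤ Z n ω * 1 := mul_le_mul_of_nonneg_left h3 (hZpos n ω).le
        _ = Z n ω := mul_one _
        _ ≤ Cg ^ n := h1
    have hFint : Integrable F μ := by
      refine Integrable.mono' (integrable_const (Cg ^ n)) ((hFsm.mono (hle n)).aestronglyMeasurable) ?_
      filter_upwards [hFbd] with ω hω
      rw [Real.norm_eq_abs, abs_of_pos (hFpos ω)]; exact hω
    -- Z (n+1) = F * g (n+1)
    have hsplit : Z (n+1) = fun ω => F ω * g (n+1) ω := by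
      funext ω
      simp only [hZ, hF, hg]
      rw [← Real.exp_add, ← Real.exp_add]
      congr 1
      rw [Icc1succ n, Finset.sum_insert (by simp), Finset.sum_insert (by simp),
        Finset.sum_insert (by simp)]
      have hmi : c * (if y < ξ (n+1) ω then (ξ (n+1) ω)^2 else 0)
          = (if y < ξ (n+1) ω then c*(ξ (n+1) ω)^2 else 0) := by rw [mul_ite, mul_zero]
      rw [← hmi]
      ring
    have hFgint : Integrable (fun ω => F ω * g (n+1) ω) μ := by
      rw [← hsplit]; exact hZint (n+1)
    -- conditional expectation step
    have hcond1 : μ[g (n+1) | 𝔉 n] ≤ᵐ[μ]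
        μ[fun ω => 1 + l * ξ (n+1) ω + c * (if ξ (n+1) ω ≤ y then (ξ (n+1) ω)^2 else 0) | 𝔉 n] := by
      apply condExp_mono (hgint (n+1))
      · exact ((integrable_const 1).add ((hξint (n+1)).const_mul l)).add ((hite2int (n+1)).const_mul c)
      · refine Filter.Eventually.of_forall fun ω => ?_
        have := auxPT hl hy hly hc (ξ (n+1) ω)
        simp only [hg, mul_ite, mul_zero] at this ⊢
        convert this using 1
    have hcond2 : μ[fun ω => 1 + l * ξ (n+1) ω + c * (if ξ (n+1) ω ≤ y then (ξ (n+1) ω)^2 else 0) | 𝔉 n]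
        =ᵐ[μ] fun ω => 1 + l * (μ[ξ (n+1) | 𝔉 n]) ω + c * D (n+1) ω := by
      have e1 : (fun ω => 1 + l * ξ (n+1) ω + c * (if ξ (n+1) ω ≤ y then (ξ (n+1) ω)^2 else 0))
          = (fun ω => (1:ℝ)) + (l • ξ (n+1) + c • (fun ω => if ξ (n+1) ω ≤ y then (ξ (n+1) ω)^2 else 0)) := by
        funext ω; simp [smul_eq_mul]; ring
      rw [e1]
      have h2 := condExp_add (m := 𝔉 n) (integrable_const (1:ℝ))
        (((hξint (n+1)).smul l).add ((hite2int (n+1)).smul c))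
      refine h2.trans ?_
      have h3 := condExp_add (m := 𝔉 n) ((hξint (n+1)).smul l) ((hite2int (n+1)).smul c)
      have h4 := condExp_smul (m := 𝔉 n) (μ := μ) l (ξ (n+1))
      have h5 := condExp_smul (m := 𝔉 n) (μ := μ) c (fun ω => if ξ (n+1) ω ≤ y then (ξ (n+1) ω)^2 else 0)
      filter_upwards [h3, h4, h5] with ω h3 h4 h5
      simp only [Pi.add_apply]
      rw [condExp_const (hle n)]
      simp only [Pi.add_apply, Pi.smul_apply, smul_eq_mul] at h3 h4 h5 ⊢
      rw [h3, h4, h5]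
      simp only [hD, Nat.add_sub_cancel_left, Nat.add_sub_cancel]
      ring
    have hmart1 : μ[ξ (n+1) | 𝔉 n] =ᵐ[μ] 0 := by
      have := hmart (n+1) (by omega)
      simpa using this
    have hcond : μ[g (n+1) | 𝔉 n] ≤ᵐ[μ] fun ω => Real.exp (c * D (n+1) ω) := by
      filter_upwards [hcond1, hcond2, hmart1] with ω h1 h2 h3
      have h4 := Real.add_one_le_exp (c * D (n+1) ω)
      calc (μ[g (n+1) | 𝔉 n]) ω ≤ 1 + l * (μ[ξ (n+1) | 𝔉 n]) ω + c * D (n+1) ω := by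
            rw [← h2]; exact h1
        _ = 1 + c * D (n+1) ω := by rw [h3]; simp
        _ ≤ Real.exp (c * D (n+1) ω) := by linarith
    -- pull out
    have hpull : μ[(fun ω => F ω * g (n+1) ω) | 𝔉 n] =ᵐ[μ] fun ω => F ω * (μ[g (n+1) | 𝔉 n]) ω := by
      have := condExp_mul_of_stronglyMeasurable_left hFsm hFgint (hgint (n+1))
      filter_upwards [this] with ω hω
      exact hω
    have hstep : ∫ ω, Z (n+1) ω ∂μ ≤ ∫ ω, Z n ω ∂μ := by
      have e1 : ∫ ω, Z (n+1) ω ∂μ = ∫ ω, F ω * g (n+1) ω ∂μ := by rw [hsplit]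
      have e2 : ∫ ω, F ω * g (n+1) ω ∂μ = ∫ ω, (μ[(fun ω => F ω * g (n+1) ω) | 𝔉 n]) ω ∂μ :=
        (integral_condExp (hle n)).symm
      have e3 : ∫ ω, (μ[(fun ω => F ω * g (n+1) ω) | 𝔉 n]) ω ∂μ
          = ∫ ω, F ω * (μ[g (n+1) | 𝔉 n]) ω ∂μ := integral_congr_ae hpull
      have e4 : ∫ ω, F ω * (μ[g (n+1) | 𝔉 n]) ω ∂μ ≤ ∫ ω, Z n ω ∂μ := by
        apply integral_mono_ae
        · exact (integrable_condExp).congr hpull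
        · exact hZint n
        · filter_upwards [hcond] with ω hω
          calc F ω * (μ[g (n+1) | 𝔉 n]) ω ≤ F ω * Real.exp (c * D (n+1) ω) :=
                mul_le_mul_of_nonneg_left hω (hFpos ω).le
            _ = Z n ω := by
                simp only [hF]
                rw [mul_assoc, ← Real.exp_add]
                simp
      rw [e1, e2, e3]; exact e4
    exact ⟨hZint (n+1), le_trans hstep ihint⟩

set_option maxHeartbeats 2000000 in
theorem stmt_10 {Ω : Type*} {m : MeasurableSpace Ω} {μ : Measure Ω} [IsProbabilityMeasure μ]
    (𝔉 : ℕ → MeasurableSpace Ω) (hle : ∀ i, 𝔉 i ≤ m) (hmono : Monotone 𝔉)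
    (ξ : ℕ → Ω → ℝ)
    (hadp : ∀ i, StronglyMeasurable[𝔉 i] (ξ i))
    (hsq : ∀ i, Integrable (fun ω => (ξ i ω) ^ 2) μ)
    (hmart : ∀ i : ℕ, 1 ≤ i → μ[ξ i | 𝔉 (i - 1)] =ᵐ[μ] 0)
    (n : ℕ) (x y b M : ℝ) (hx : 0 < x) (hy : 0 ≤ y) (hb : 0 < b) (hM : 1 ≤ M)
    (S B : Ω → ℝ)
    (hS : S = fun ω => ∑ i ∈ Finset.Icc 1 n, ξ i ω)
    (hB : B = fun ω =>
      (∑ i ∈ Finset.Icc 1 n, if y < ξ i ω then (ξ i ω) ^ 2 else 0)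
        + ∑ i ∈ Finset.Icc 1 n,
            (μ[fun ω' => if ξ i ω' ≤ y then (ξ i ω') ^ 2 else 0 | 𝔉 (i - 1)]) ω) :
    (μ {ω | x * Real.sqrt (B ω) ≤ S ω ∧ b ≤ Real.sqrt (B ω) ∧ Real.sqrt (B ω) ≤ b * M}).toReal ≤
      Real.sqrt (Real.exp 1) * (1 + 2 * (1 + x) * Real.log M) *
        Real.exp (-x ^ 2 / (2 * (1 + x * y / (3 * b)))) := by
  classical
  have hx0 : 0 ≤ x := hx.le
  have hM0 : (0:ℝ) < M := lt_of_lt_of_le one_pos hM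
  -- basic quantities
  set t : ℝ := x*y/(3*b) with ht
  have ht0 : 0 ≤ t := by positivity
  have h1t : (0:ℝ) < 1 + t := by linarith
  have hxy3bt : x*y = 3*b*t := by rw [ht]; field_simp
  set G : ℝ := x^2/(2*(1+t)) with hG
  have hG0 : 0 ≤ G := by positivity
  set K : ℕ := max 1 ⌈2*(1+x)*Real.log M⌉₊ with hK
  have hK1 : 1 ≤ K := le_max_left _ _
  have hKR : (1:ℝ) ≤ (K:ℝ) := by exact_mod_cast hK1
  have hK0 : (0:ℝ) < (K:ℝ) := lt_of_lt_of_le one_pos hKR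
  have hlogM : 0 ≤ Real.log M := Real.log_nonneg hM
  set δ : ℝ := M^((K:ℝ)⁻¹) with hδ
  have hδ1 : 1 ≤ δ := Real.one_le_rpow hM (by positivity)
  have hδ0 : (0:ℝ) < δ := lt_of_lt_of_le one_pos hδ1
  have hδK : δ ^ K = M := Real.rpow_inv_natCast_pow hM0.le (by omega)
  have hlogδ : Real.log δ = (K:ℝ)⁻¹ * Real.log M := Real.log_rpow hM0 _
  have hceil : 2*(1+x)*Real.log M ≤ ((⌈2*(1+x)*Real.log M⌉₊ : ℕ) : ℝ) := Nat.le_ceil _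
  have hceilK : ((⌈2*(1+x)*Real.log M⌉₊ : ℕ) : ℝ) ≤ (K:ℝ) := by
    exact_mod_cast le_max_right 1 ⌈2*(1+x)*Real.log M⌉₊
  have hlogδ' : Real.log δ ≤ 1/(2*(1+x)) := by
    rw [hlogδ, inv_mul_le_iff₀ hK0, mul_one_div, le_div_iff₀ (by linarith : (0:ℝ) < 2*(1+x))]
    have h2 : 2*(1+x)*Real.log M ≤ (K:ℝ) := le_trans hceil hceilK
    nlinarith
  have hδe : δ ≤ Real.exp (1/2) := by
    have h1 : δ = Real.exp (Real.log δ) := (Real.exp_log hδ0).symm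
    rw [h1]
    apply Real.exp_le_exp.2
    have h2 : 1/(2*(1+x)) ≤ 1/2 := by
      rw [div_le_div_iff₀ (by linarith) two_pos]
      linarith
    linarith [hlogδ']
  have hδ17 : δ ≤ 1.7 := by
    have h1 : Real.exp (1/2) ≤ 1.7 := by
      nlinarith [Real.exp_one_lt_d9, Real.exp_pos (1/2 : ℝ),
        (by rw [← Real.exp_add]; norm_num : Real.exp (1/2 : ℝ) * Real.exp (1/2 : ℝ) = Real.exp 1)]
    linarith [hδe]
  have hδ1' : 2*(1+x)*(δ - 1) ≤ 1.7 := by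
    have hlog1 : δ - 1 ≤ δ * Real.log δ := by
      have h2 := Real.log_le_sub_one_of_pos (show (0:ℝ) < δ⁻¹ by positivity)
      rw [Real.log_inv] at h2
      have h3 : δ * δ⁻¹ = 1 := mul_inv_cancel₀ (ne_of_gt hδ0)
      nlinarith
    have h5 : (0:ℝ) < 1 + x := by linarith
    have h4 : δ * Real.log δ ≤ 1.7 * (1/(2*(1+x))) :=
      mul_le_mul hδ17 hlogδ' (Real.log_nonneg hδ1) (by norm_num)
    have h6 : δ - 1 ≤ 1.7 * (1/(2*(1+x))) := le_trans hlog1 h4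
    have h7 := mul_le_mul_of_nonneg_right h6 (by positivity : (0:ℝ) ≤ 2*(1+x))
    calc 2*(1+x)*(δ-1) = (δ-1) * (2*(1+x)) := by ring
      _ ≤ (1.7*(1/(2*(1+x)))) * (2*(1+x)) := h7
      _ = 1.7 := by field_simp
  -- slice data
  obtain ⟨v, hvv⟩ : ∃ v : ℕ → ℝ, ∀ j, v j = b * δ^j := ⟨_, fun _ => rfl⟩
  have hv0 : ∀ j, 0 < v j := fun j => by rw [hvv]; positivity
  have hvb : ∀ j, b ≤ v j := by
    intro j
    rw [hvv]
    nlinarith [one_le_pow₀ hδ1 (n := j)]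
  obtain ⟨lj, hlj⟩ : ∃ lj : ℕ → ℝ, ∀ j, lj j = 2*x/((1+t)*(v j)*(δ+1)) := ⟨_, fun _ => rfl⟩
  obtain ⟨cj, hcj⟩ : ∃ cj : ℕ → ℝ, ∀ j, cj j = lj j * x/((v j)*(δ+1)) := ⟨_, fun _ => rfl⟩
  set mm : ℝ := 2*x^2*δ/((1+t)*(δ+1)^2) with hmm
  have hlj0 : ∀ j, 0 < lj j := fun j => by
    have := hv0 j; rw [hlj]; positivity
  have hcj0 : ∀ j, 0 < cj j := fun j => by
    have h1 := hv0 j; have h2 := hlj0 j; rw [hcj]; positivity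
  have hly2 : ∀ j, lj j * y ≤ 3*t/(1+t) := by
    intro j
    rw [hlj]
    rw [div_mul_eq_mul_div, div_le_div_iff₀ (by have := hv0 j; positivity) h1t]
    have h6 : b*2 ≤ (v j)*(δ+1) := by nlinarith [hvb j, hv0 j, hδ1, hb]
    have h9 : 2*x*y*(1+t) = 3*t*(b*2)*(1+t) := by linear_combination 2*(1+t)*hxy3bt
    have h10 := mul_le_mul_of_nonneg_right
      (mul_le_mul_of_nonneg_left h6 (by positivity : (0:ℝ) ≤ 3*t)) h1t.le
    nlinarith [h9, h10]
  have hly : ∀ j, lj j * y < 3 := by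
    intro j
    have h7 : 3*t/(1+t) < 3 := by
      rw [div_lt_iff₀ h1t]; nlinarith
    linarith [hly2 j]
  have hcc : ∀ j, 3*(lj j)^2 ≤ 2*(cj j)*(3 - lj j * y) := by
    intro j
    have hvj := hv0 j
    have hcval : cj j = (lj j)^2 * (1+t)/2 := by
      rw [hcj, hlj]
      field_simp
    have h5 : (1+t) * (lj j*y) ≤ 3*t := by
      have h8 := hly2 j
      rw [le_div_iff₀ h1t] at h8
      linarith
    have h4 : 3 ≤ (1+t)*(3 - lj j*y) := by nlinarith
    rw [hcval]
    nlinarith [sq_nonneg (lj j), mul_nonneg (sq_nonneg (lj j)) (by linarith : (0:ℝ) ≤ (1+t)*(3 - lj j*y) - 3)]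
  have hend1 : ∀ j, (lj j * x) * (v j) - cj j * (v j)^2 = mm := by
    intro j
    have hvj := hv0 j
    rw [hcj, hlj, hmm]
    field_simp
    ring
  have hend2 : ∀ j, (lj j * x) * (v j * δ) - cj j * (v j * δ)^2 = mm := by
    intro j
    have hvj := hv0 j
    rw [hcj, hlj, hmm]
    field_simp
    ring
  -- mm ≥ G - 1/2
  have hmG : G - 1/2 ≤ mm := by
    have hGm : G - mm = x^2*(δ-1)^2/(2*(1+t)*(δ+1)^2) := by
      rw [hG, hmm]
      field_simp
      ring
    have hδm1 : (0:ℝ) ≤ δ - 1 := by linarith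
    have hsq1 : (2*(1+x)*(δ-1))^2 ≤ 1.7^2 := by
      nlinarith [hδ1', mul_nonneg (by positivity : (0:ℝ) ≤ 2*(1+x)) hδm1]
    have h8 : x^2*(δ-1)^2 ≤ (1.7)^2/4 := by
      nlinarith [sq_nonneg (δ-1), hx0]
    have h9 : (8:ℝ) ≤ 2*(1+t)*(δ+1)^2 := by nlinarith
    have h10 : x^2*(δ-1)^2/(2*(1+t)*(δ+1)^2) ≤ ((1.7)^2/4)/8 :=
      div_le_div₀ (by norm_num) h8 (by norm_num) h9
    have h11 : ((1.7:ℝ)^2/4)/8 ≤ 1/2 := by norm_num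
    linarith
  -- sqrt e
  have hsqrt : Real.sqrt (Real.exp 1) = Real.exp (1/2) := by
    rw [show Real.exp 1 = Real.exp (1/2) * Real.exp (1/2) by rw [← Real.exp_add]; norm_num]
    exact Real.sqrt_mul_self (Real.exp_pos _).le
  -- slices
  obtain ⟨A, hA⟩ : ∃ A : ℕ → Set Ω, ∀ j, A j =
      {ω | x * Real.sqrt (B ω) ≤ S ω ∧ v j ≤ Real.sqrt (B ω) ∧ Real.sqrt (B ω) ≤ v j * δ} :=
    ⟨_, fun _ => rfl⟩
  -- covering
  have hcover : {ω | x * Real.sqrt (B ω) ≤ S ω ∧ b ≤ Real.sqrt (B ω) ∧ Real.sqrt (B ω) ≤ b * M}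
      ⊆ ⋃ j ∈ Finset.range K, A j := by
    intro ω hω
    obtain ⟨h1, h2, h3⟩ := hω
    obtain ⟨P, hPP⟩ : ∃ P : ℕ → Prop, ∀ j, P j = (b * δ^j ≤ Real.sqrt (B ω)) := ⟨_, fun _ => rfl⟩
    have hP0 : P 0 := by rw [hPP]; simpa using h2
    have hjg : P (Nat.findGreatest P K) := Nat.findGreatest_spec (Nat.zero_le K) hP0
    have hjgle : Nat.findGreatest P K ≤ K := Nat.findGreatest_le K
    simp only [Set.mem_iUnion, Finset.mem_range, exists_prop]
    rcases eq_or_lt_of_le hjgle with he|hlt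
    · refine ⟨K-1, by omega, ?_⟩
      rw [hA]
      refine ⟨h1, ?_, ?_⟩
      · have h4 : b * δ^K ≤ Real.sqrt (B ω) := by rw [← hPP]; rw [← he]; exact hjg
        have h5 : v (K-1) ≤ b * δ^K := by
          rw [hvv]
          have : δ^(K-1) ≤ δ^K := pow_le_pow_right₀ hδ1 (by omega)
          nlinarith
        linarith
      · have h5 : v (K-1) * δ = b * δ^K := by
          rw [hvv, mul_assoc, ← pow_succ]
          congr 2
          omega
        rw [h5, hδK]
        exact h3
    · refine ⟨Nat.findGreatest P K, hlt, ?_⟩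
      rw [hA]
      have h4 : ¬ P (Nat.findGreatest P K + 1) :=
        Nat.findGreatest_is_greatest (Nat.lt_succ_self _) (by omega)
      rw [hPP] at h4
      push_neg at h4
      have hjg2 : v (Nat.findGreatest P K) ≤ Real.sqrt (B ω) := by
        rw [hvv, ← hPP]; exact hjg
      refine ⟨h1, hjg2, ?_⟩
      have h5 : v (Nat.findGreatest P K) * δ = b * δ^(Nat.findGreatest P K + 1) := by
        rw [hvv, mul_assoc, ← pow_succ]
      rw [h5]
      exact h4.le
  -- per-slice bound
  have hslice : ∀ j, (μ (A j)).toReal ≤ Real.exp (-mm) := by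
    intro j
    obtain ⟨hZint, hZle1⟩ := auxSM 𝔉 hle hmono ξ hadp hsq hmart (hlj0 j).le hy (hly j) (hcc j) n
    obtain ⟨Zf, hZfEq⟩ : ∃ Zf : Ω → ℝ, Zf = (fun ω => Real.exp (lj j * (∑ i ∈ Finset.Icc 1 n, ξ i ω)
      - cj j * ((∑ i ∈ Finset.Icc 1 n, if y < ξ i ω then (ξ i ω)^2 else 0)
        + ∑ i ∈ Finset.Icc 1 n, (μ[fun ω' => if ξ i ω' ≤ y then (ξ i ω')^2 else 0 | 𝔉 (i-1)]) ω))) :=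
      ⟨_, rfl⟩
    rw [← hZfEq] at hZint hZle1
    have hZf : ∀ ω, Zf ω = Real.exp (lj j * (∑ i ∈ Finset.Icc 1 n, ξ i ω)
      - cj j * ((∑ i ∈ Finset.Icc 1 n, if y < ξ i ω then (ξ i ω)^2 else 0)
        + ∑ i ∈ Finset.Icc 1 n, (μ[fun ω' => if ξ i ω' ≤ y then (ξ i ω')^2 else 0 | 𝔉 (i-1)]) ω)) :=
      fun ω => by rw [hZfEq]
    have hsub : A j ⊆ {ω | Real.exp mm ≤ Zf ω} := by
      intro ω hω
      rw [hA] at hω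
      obtain ⟨h1, h2, h3⟩ := hω
      have hSω : S ω = ∑ i ∈ Finset.Icc 1 n, ξ i ω := by rw [hS]
      have hBω : B ω = (∑ i ∈ Finset.Icc 1 n, if y < ξ i ω then (ξ i ω)^2 else 0)
        + ∑ i ∈ Finset.Icc 1 n, (μ[fun ω' => if ξ i ω' ≤ y then (ξ i ω')^2 else 0 | 𝔉 (i-1)]) ω := by
        rw [hB]
      show Real.exp mm ≤ Zf ω
      rw [hZf, ← hSω, ← hBω, Real.exp_le_exp]
      have hr0 : 0 < Real.sqrt (B ω) := lt_of_lt_of_le (hv0 j) h2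
      have hB0 : 0 ≤ B ω := by
        by_contra h
        push_neg at h
        rw [Real.sqrt_eq_zero_of_nonpos h.le] at hr0
        exact lt_irrefl 0 hr0
      have hBr : B ω = (Real.sqrt (B ω))^2 := (Real.sq_sqrt hB0).symm
      have hch := auxChord (a := lj j * x) (c := cj j) (hcj0 j).le h2 h3
      rw [hend1 j, hend2 j, min_self] at hch
      have h4 : lj j * (x * Real.sqrt (B ω)) ≤ lj j * S ω :=
        mul_le_mul_of_nonneg_left h1 (hlj0 j).le
      calc mm ≤ (lj j * x) * Real.sqrt (B ω) - cj j * (Real.sqrt (B ω))^2 := hch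
        _ = lj j * (x * Real.sqrt (B ω)) - cj j * B ω := by rw [← hBr]; ring
        _ ≤ lj j * S ω - cj j * B ω := by linarith
    have hmkv := mul_meas_ge_le_integral_of_nonneg
      (Filter.Eventually.of_forall fun ω => by rw [hZf ω]; exact (Real.exp_pos _).le)
      hZint (Real.exp mm)
    have h5 : Real.exp mm * (μ {ω | Real.exp mm ≤ Zf ω}).toReal ≤ 1 := le_trans hmkv hZle1
    have h6 : (μ (A j)).toReal ≤ (μ {ω | Real.exp mm ≤ Zf ω}).toReal :=
      ENNReal.toReal_mono (measure_ne_top μ _) (measure_mono hsub)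
    have h7 : (0:ℝ) ≤ (μ {ω | Real.exp mm ≤ Zf ω}).toReal := ENNReal.toReal_nonneg
    have h8 : Real.exp mm * Real.exp (-mm) = 1 := by rw [← Real.exp_add]; simp
    nlinarith [Real.exp_pos mm, Real.exp_pos (-mm)]
  -- assemble
  have hsum : (μ {ω | x * Real.sqrt (B ω) ≤ S ω ∧ b ≤ Real.sqrt (B ω) ∧ Real.sqrt (B ω) ≤ b * M}).toReal
      ≤ ∑ j ∈ Finset.range K, (μ (A j)).toReal := by
    have h1 := measure_mono (μ := μ) hcover
    have h2 := measure_biUnion_finset_le (μ := μ) (Finset.range K) A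
    have h3 := le_trans h1 h2
    calc (μ {ω | x * Real.sqrt (B ω) ≤ S ω ∧ b ≤ Real.sqrt (B ω) ∧ Real.sqrt (B ω) ≤ b * M}).toReal
        ≤ (∑ j ∈ Finset.range K, μ (A j)).toReal :=
          ENNReal.toReal_mono (ENNReal.sum_lt_top.2 fun j _ => measure_lt_top μ _).ne h3
      _ = ∑ j ∈ Finset.range K, (μ (A j)).toReal :=
          ENNReal.toReal_sum fun j _ => measure_ne_top μ _
  have hKle : (K:ℝ) ≤ 1 + 2*(1+x)*Real.log M := by
    rcases le_or_gt (⌈2*(1+x)*Real.log M⌉₊) 1 with h|h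
    · have hKeq : K = 1 := by rw [hK]; exact max_eq_left h
      rw [hKeq]
      have : (0:ℝ) ≤ 2*(1+x)*Real.log M := by positivity
      norm_num
      linarith
    · have hKeq : K = ⌈2*(1+x)*Real.log M⌉₊ := by rw [hK]; exact max_eq_right h.le
      rw [hKeq]
      have := Nat.ceil_lt_add_one (by positivity : (0:ℝ) ≤ 2*(1+x)*Real.log M)
      linarith
  have hexpmm : Real.exp (-mm) ≤ Real.exp (1/2) * Real.exp (-G) := by
    rw [← Real.exp_add]
    apply Real.exp_le_exp.2
    linarith
  calc (μ {ω | x * Real.sqrt (B ω) ≤ S ω ∧ b ≤ Real.sqrt (B ω) ∧ Real.sqrt (B ω) ≤ b * M}).toReal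
      ≤ ∑ j ∈ Finset.range K, (μ (A j)).toReal := hsum
    _ ≤ ∑ j ∈ Finset.range K, Real.exp (-mm) := Finset.sum_le_sum fun j _ => hslice j
    _ = (K:ℝ) * Real.exp (-mm) := by
        rw [Finset.sum_const, Finset.card_range, nsmul_eq_mul]
    _ ≤ (K:ℝ) * (Real.exp (1/2) * Real.exp (-G)) :=
        mul_le_mul_of_nonneg_left hexpmm (by positivity)
    _ ≤ (1 + 2*(1+x)*Real.log M) * (Real.exp (1/2) * Real.exp (-G)) :=
        mul_le_mul_of_nonneg_right hKle (by positivity)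
    _ = Real.sqrt (Real.exp 1) * (1 + 2 * (1 + x) * Real.log M) * Real.exp (-x ^ 2 / (2 * (1 + t))) := by
        rw [hsqrt, show -x^2/(2*(1+t)) = -G by rw [hG]; ring]
        ring
end

section
/- Let (ξ_i, 𝔉_i) be square-integrable martingale differences, S_n = Σ ξ_i, B_n(0) = Σ (ξ_i⁺)² + Σ E[(ξ_i⁻)² | 𝔉_{i-1}]. Then for all b > 0, M ≥ 1 and x > 0, P(S_n ≥ x √(B_n(0)), b ≤ √(B_n(0)) ≤ bM) ≤ √e (1 + 2(1+x) ln M) exp{- x²/2}. -/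
open MeasureTheory Real Finset

lemma aux_log_quad (u : ℝ) (hu : 0 ≤ u) : u - u^2/2 ≤ Real.log (1+u) := by
  have h : ∀ v ∈ Set.Ici (0:ℝ),
      HasDerivAt (fun t => Real.log (1+t) - t + t^2/2) ((1+v)⁻¹ - 1 + v) v := by
    intro v hv
    have h1 : (0:ℝ) < 1 + v := by simp at hv; linarith
    have hlog : HasDerivAt (fun t : ℝ => Real.log (1+t)) ((1+v)⁻¹) v := by
      have := (Real.hasDerivAt_log h1.ne').comp v ((hasDerivAt_id v).const_add 1)
      simpa [Function.comp_def] using this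
    have := (hlog.sub (hasDerivAt_id v)).add ((hasDerivAt_pow 2 v).div_const 2)
    exact this.congr_deriv (by push_cast; ring)
  have hmono : MonotoneOn (fun t => Real.log (1+t) - t + t^2/2) (Set.Ici 0) := by
    refine monotoneOn_of_deriv_nonneg (convex_Ici 0)
      (fun v hv => ((h v hv).continuousAt.continuousWithinAt)) ?_ ?_
    · intro v hv
      exact ((h v (interior_subset hv)).differentiableAt).differentiableWithinAt
    · intro v hv
      rw [interior_Ici] at hv
      have hv' : (0:ℝ) < v := hv
      rw [(h v hv'.le).deriv]
      have : (0:ℝ) < 1 + v := by linarith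
      have h3 : (1+v)⁻¹ * (1+v) = 1 := inv_mul_cancel₀ this.ne'
      have h4 : (0:ℝ) < (1+v)⁻¹ := by positivity
      nlinarith
  have := hmono (Set.self_mem_Ici) (Set.mem_Ici.2 hu) hu
  simp at this
  linarith

lemma aux_exp_le_one_add (u : ℝ) (hu : 0 ≤ u) : Real.exp (u - u^2/2) ≤ 1 + u := by
  have := aux_log_quad u hu
  have h1 : (0:ℝ) < 1 + u := by linarith
  calc Real.exp (u - u^2/2) ≤ Real.exp (Real.log (1+u)) := Real.exp_le_exp.2 this
    _ = 1 + u := Real.exp_log h1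

lemma aux_exp_le_quad (v : ℝ) (hv : v ≤ 0) : Real.exp v ≤ 1 + v + v^2/2 := by
  have h := Real.quadratic_le_exp_of_nonneg (neg_nonneg.2 hv)
  have hpos : (0:ℝ) < 1 - v + v^2/2 := by nlinarith [sq_nonneg (1-v)]
  have h2 : Real.exp (-v) = (Real.exp v)⁻¹ := Real.exp_neg v
  have hev : (0:ℝ) < Real.exp v := Real.exp_pos v
  rw [h2] at h
  have h3 : 1 - v + v^2/2 ≤ (Real.exp v)⁻¹ := by
    have : 1 + (-v) + (-v)^2/2 = 1 - v + v^2/2 := by ring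
    linarith [h, this.symm.le]
  have h4 : (1 - v + v^2/2) * Real.exp v ≤ 1 := by
    have := mul_le_mul_of_nonneg_right h3 hev.le
    rwa [inv_mul_cancel₀ hev.ne'] at this
  nlinarith [sq_nonneg (v^2)]

/-- The key pointwise bound: exp(u - (u⁺)²/2) ≤ 1 + u + (u⁻)²/2. -/
lemma aux_key_pointwise (u : ℝ) :
    Real.exp (u - (max u 0)^2/2) ≤ 1 + u + (max (-u) 0)^2/2 := by
  rcases le_or_gt 0 u with h | h
  · rw [max_eq_left h, max_eq_right (by linarith)]
    have := aux_exp_le_one_add u h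
    simpa using by linarith
  · rw [max_eq_right h.le, max_eq_left (by linarith)]
    have := aux_exp_le_quad u h.le
    simpa using by linarith

lemma aux_key2 (l t : ℝ) (hl : 0 ≤ l) :
    Real.exp (l*t - l^2/2*(max t 0)^2) ≤ 1 + l*t + l^2/2*(max (-t) 0)^2 := by
  have h1 : max (l*t) 0 = l * max t 0 := by
    rw [mul_max_of_nonneg _ _ hl, mul_zero]
  have h2 : max (-(l*t)) 0 = l * max (-t) 0 := by
    rw [mul_max_of_nonneg _ _ hl, mul_zero, mul_neg]
  have key : Real.exp (l*t - (max (l*t) 0)^2/2) ≤ 1 + l*t + (max (-(l*t)) 0)^2/2 :=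
    aux_key_pointwise (l*t)
  rw [h1, h2] at key
  calc Real.exp (l*t - l^2/2*(max t 0)^2)
      = Real.exp (l*t - (l * max t 0)^2/2) := by ring_nf
    _ ≤ 1 + l*t + (l * max (-t) 0)^2/2 := key
    _ = 1 + l*t + l^2/2*(max (-t) 0)^2 := by ring

lemma aux_sup {Ω : Type*} {m : MeasurableSpace Ω} {μ : Measure Ω} [IsProbabilityMeasure μ]
    (𝔉 : ℕ → MeasurableSpace Ω) (hle : ∀ i, 𝔉 i ≤ m) (hmono : Monotone 𝔉)
    (ξ : ℕ → Ω → ℝ)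
    (hadp : ∀ i, StronglyMeasurable[𝔉 i] (ξ i))
    (hsq : ∀ i, Integrable (fun ω => (ξ i ω) ^ 2) μ)
    (hmart : ∀ i : ℕ, 1 ≤ i → μ[ξ i | 𝔉 (i - 1)] =ᵐ[μ] 0)
    (l : ℝ) (hl : 0 ≤ l) (n : ℕ) :
    Integrable (fun ω => Real.exp (l * (∑ i ∈ Icc 1 n, ξ i ω)
      - l^2/2 * ((∑ i ∈ Icc 1 n, (max (ξ i ω) 0)^2)
        + ∑ i ∈ Icc 1 n, (μ[fun ω' => (max (-(ξ i ω')) 0)^2 | 𝔉 (i-1)]) ω))) μ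
    ∧ ∫ ω, Real.exp (l * (∑ i ∈ Icc 1 n, ξ i ω)
      - l^2/2 * ((∑ i ∈ Icc 1 n, (max (ξ i ω) 0)^2)
        + ∑ i ∈ Icc 1 n, (μ[fun ω' => (max (-(ξ i ω')) 0)^2 | 𝔉 (i-1)]) ω)) ∂μ ≤ 1 := by
  classical
  set g : ℕ → Ω → ℝ := fun i => μ[fun ω' => (max (-(ξ i ω')) 0)^2 | 𝔉 (i-1)] with hg_def
  set T : ℕ → Ω → ℝ := fun j ω => l * (∑ i ∈ Icc 1 j, ξ i ω)
      - l^2/2 * ((∑ i ∈ Icc 1 j, (max (ξ i ω) 0)^2) + ∑ i ∈ Icc 1 j, g i ω) with hT_def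
  have hsm : ∀ i, StronglyMeasurable[m] (ξ i) := fun i => (hadp i).mono (hle i)
  have hξint : ∀ i, Integrable (ξ i) μ := by
    intro i
    refine Integrable.mono' (((hsq i).const_mul (1/2)).add (integrable_const (1/2)))
      (hsm i).aestronglyMeasurable (ae_of_all _ fun ω => ?_)
    simp only [Real.norm_eq_abs, Pi.add_apply]
    nlinarith [sq_nonneg (|ξ i ω| - 1), sq_abs (ξ i ω), abs_nonneg (ξ i ω)]
  have hnsm : ∀ i, StronglyMeasurable[m] (fun ω => (max (-(ξ i ω)) 0)^2) := by
    intro i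
    exact (((hsm i).measurable.neg.max measurable_const).pow_const 2).stronglyMeasurable
  have hneg_int : ∀ i, Integrable (fun ω => (max (-(ξ i ω)) 0)^2) μ := by
    intro i
    refine Integrable.mono' (hsq i) (hnsm i).aestronglyMeasurable (ae_of_all _ fun ω => ?_)
    simp only [Real.norm_eq_abs]
    rcases le_total (-(ξ i ω)) 0 with h | h
    · rw [max_eq_right h]; simpa using sq_nonneg (ξ i ω)
    · rw [max_eq_left h, abs_of_nonneg (by positivity)]; nlinarith
  have hg_meas : ∀ i, StronglyMeasurable[𝔉 (i-1)] (g i) := fun i => stronglyMeasurable_condExp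
  have hg_int : ∀ i, Integrable (g i) μ := fun i => integrable_condExp
  have hg_nonneg : ∀ i, 0 ≤ᵐ[μ] g i :=
    fun i => condExp_nonneg (ae_of_all _ fun ω => by simp only [Pi.zero_apply]; positivity)
  have hhalf : ∀ t : ℝ, l * t - l^2/2 * (max t 0)^2 ≤ 1/2 := by
    intro t
    rcases le_total t 0 with h | h
    · rw [max_eq_right h]
      nlinarith [mul_nonneg hl (neg_nonneg.2 h)]
    · rw [max_eq_left h]
      nlinarith [sq_nonneg (l*t - 1)]
  have hT_sm : ∀ j, StronglyMeasurable[m] (T j) := by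
    intro j
    apply StronglyMeasurable.sub
    · exact stronglyMeasurable_const.mul (Finset.stronglyMeasurable_fun_sum _ (fun i _ => hsm i))
    · refine stronglyMeasurable_const.mul (StronglyMeasurable.add ?_ ?_)
      · refine Finset.stronglyMeasurable_fun_sum _ (fun i _ => ?_)
        exact (((hsm i).measurable.max measurable_const).pow_const 2).stronglyMeasurable
      · exact Finset.stronglyMeasurable_fun_sum _ (fun i _ => ((hg_meas i).mono (hle _)))
  have hT_le : ∀ j, ∀ᵐ ω ∂μ, T j ω ≤ j * (1/2) := by
    intro j
    filter_upwards [ae_all_iff.2 (fun i : ℕ => hg_nonneg i)] with ω hω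
    have h1 : ∑ i ∈ Icc 1 j, (l * ξ i ω - l^2/2 * (max (ξ i ω) 0)^2) ≤ ∑ _i ∈ Icc 1 j, (1/2:ℝ) :=
      Finset.sum_le_sum (fun i _ => hhalf (ξ i ω))
    have h2 : (0:ℝ) ≤ ∑ i ∈ Icc 1 j, g i ω := Finset.sum_nonneg (fun i _ => hω i)
    have h3 : ∑ _i ∈ Icc 1 j, (1/2:ℝ) = j * (1/2) := by
      rw [Finset.sum_const, Nat.card_Icc]; simp
    have h4 : T j ω = ∑ i ∈ Icc 1 j, (l * ξ i ω - l^2/2 * (max (ξ i ω) 0)^2)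
        - l^2/2 * ∑ i ∈ Icc 1 j, g i ω := by
      rw [Finset.sum_sub_distrib, ← Finset.mul_sum, ← Finset.mul_sum]
      simp only [hT_def]; ring
    have h5 : (0:ℝ) ≤ l^2/2 * ∑ i ∈ Icc 1 j, g i ω := by positivity
    linarith
  have hZ_int : ∀ j, Integrable (fun ω => Real.exp (T j ω)) μ := by
    intro j
    refine Integrable.mono' (integrable_const (Real.exp (j * (1/2))))
      ((Real.continuous_exp.comp_stronglyMeasurable (hT_sm j)).aestronglyMeasurable) ?_
    filter_upwards [hT_le j] with ω hω
    rw [Real.norm_eq_abs, abs_of_pos (Real.exp_pos _)]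
    exact Real.exp_le_exp.2 hω
  -- per-step conditional expectation bound
  have hY_sm : ∀ i, StronglyMeasurable[m]
      (fun ω => Real.exp (l * ξ i ω - l^2/2 * (max (ξ i ω) 0)^2)) := by
    intro i
    refine Real.continuous_exp.comp_stronglyMeasurable ?_
    exact (stronglyMeasurable_const.mul (hsm i)).sub
      (stronglyMeasurable_const.mul
        ((((hsm i).measurable.max measurable_const).pow_const 2).stronglyMeasurable))
  have hY_int : ∀ i, Integrable
      (fun ω => Real.exp (l * ξ i ω - l^2/2 * (max (ξ i ω) 0)^2)) μ := by
    intro i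
    refine Integrable.mono' (integrable_const (Real.exp (1/2)))
      (hY_sm i).aestronglyMeasurable (ae_of_all _ fun ω => ?_)
    rw [Real.norm_eq_abs, abs_of_pos (Real.exp_pos _)]
    exact Real.exp_le_exp.2 (hhalf (ξ i ω))
  have hstep : ∀ i : ℕ, 1 ≤ i →
      μ[fun ω => Real.exp (l * ξ i ω - l^2/2 * (max (ξ i ω) 0)^2)|𝔉 (i-1)]
        ≤ᵐ[μ] fun ω => 1 + l^2/2 * g i ω := by
    intro i hi
    set h : Ω → ℝ := fun ω => (max (-(ξ i ω)) 0)^2 with hh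
    have i1 : Integrable (l • ξ i) μ := (hξint i).smul l
    have i2 : Integrable ((l^2/2) • h) μ := (hneg_int i).smul (l^2/2)
    have hrhs_int : Integrable ((fun _ => (1:ℝ)) + (l • ξ i + (l^2/2) • h)) μ :=
      (integrable_const 1).add (i1.add i2)
    have hmono1 := condExp_mono (μ := μ) (m := 𝔉 (i-1)) (hY_int i) hrhs_int
      (ae_of_all _ fun ω => by
        have := aux_key2 l (ξ i ω) hl
        simp only [Pi.add_apply, Pi.smul_apply, smul_eq_mul, hh]
        linarith)
    have e1 := condExp_add (μ := μ) (m := 𝔉 (i-1)) (integrable_const (1:ℝ)) (i1.add i2)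
    have e2 := condExp_add (μ := μ) (m := 𝔉 (i-1)) i1 i2
    have e3 := condExp_smul (μ := μ) (m := 𝔉 (i-1)) l (ξ i)
    have e4 := condExp_smul (μ := μ) (m := 𝔉 (i-1)) (l^2/2) h
    have e5 := condExp_const (hle (i-1)) (1:ℝ) (μ := μ)
    have hgeq : μ[h|𝔉 (i-1)] = g i := rfl
    filter_upwards [hmono1, e1, e2, e3, e4, hmart i hi] with ω k1 k2 k3 k4 k5 k6
    rw [k2] at k1
    simp only [Pi.add_apply] at k1 k3
    rw [k3] at k1
    rw [e5] at k1
    simp only [Pi.smul_apply, smul_eq_mul] at k4 k5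
    rw [k4, k5] at k1
    rw [hgeq] at k1
    simp only [Pi.zero_apply] at k6
    rw [k6] at k1
    linarith
  -- main induction
  have main : ∀ j, ∫ ω, Real.exp (T j ω) ∂μ ≤ 1 := by
    intro j
    induction j with
    | zero =>
      simp [hT_def]
    | succ n ih =>
      set W : Ω → ℝ := fun ω => Real.exp (T n ω - l^2/2 * g (n+1) ω) with hW
      set Y : Ω → ℝ := fun ω => Real.exp (l * ξ (n+1) ω - l^2/2 * (max (ξ (n+1) ω) 0)^2) with hY
      have hTsucc : ∀ ω, T (n+1) ω = (T n ω - l^2/2 * g (n+1) ω)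
          + (l * ξ (n+1) ω - l^2/2 * (max (ξ (n+1) ω) 0)^2) := by
        intro ω
        simp only [hT_def, Finset.sum_Icc_succ_top (Nat.le_add_left 1 n)]
        ring
      have hZY : (fun ω => Real.exp (T (n+1) ω)) = fun ω => W ω * Y ω := by
        funext ω
        rw [hTsucc ω, Real.exp_add]
      have hW_sm : StronglyMeasurable[𝔉 n] W := by
        refine Real.continuous_exp.comp_stronglyMeasurable (StronglyMeasurable.sub ?_ ?_)
        · apply StronglyMeasurable.sub
          · refine stronglyMeasurable_const.mul (Finset.stronglyMeasurable_fun_sum _ (fun i hi => ?_))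
            exact (hadp i).mono (hmono (Finset.mem_Icc.1 hi).2)
          · refine stronglyMeasurable_const.mul (StronglyMeasurable.add ?_ ?_)
            · refine Finset.stronglyMeasurable_fun_sum _ (fun i hi => ?_)
              exact ((((hadp i).mono (hmono (Finset.mem_Icc.1 hi).2)).measurable.max
                measurable_const).pow_const 2).stronglyMeasurable
            · refine Finset.stronglyMeasurable_fun_sum _ (fun i hi => ?_)
              exact (hg_meas i).mono (hmono (le_trans (Nat.sub_le i 1) (Finset.mem_Icc.1 hi).2))
        · exact stronglyMeasurable_const.mul ((hg_meas (n+1)).mono (hmono (by omega)))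
      have hW_bd : ∀ᵐ ω ∂μ, ‖W ω‖ ≤ Real.exp (n * (1/2)) := by
        filter_upwards [hT_le n, hg_nonneg (n+1)] with ω h1 h2
        simp only [Pi.zero_apply] at h2
        rw [Real.norm_eq_abs, abs_of_pos (Real.exp_pos _)]
        apply Real.exp_le_exp.2
        have : (0:ℝ) ≤ l^2/2 * g (n+1) ω := by positivity
        linarith
      have hWY_int : Integrable (fun ω => W ω * Y ω) μ := by
        rw [← hZY]; exact hZ_int (n+1)
      have hpull : μ[fun ω => W ω * Y ω|𝔉 n] =ᵐ[μ] fun ω => W ω * (μ[Y|𝔉 n]) ω := by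
        have := condExp_mul_of_stronglyMeasurable_left hW_sm hWY_int (hY_int (n+1))
        exact this
      have int1 : Integrable (fun ω => W ω * (μ[Y|𝔉 n]) ω) μ :=
        integrable_condExp.congr hpull
      have int2 : Integrable (fun ω => W ω * (1 + l^2/2 * g (n+1) ω)) μ := by
        refine Integrable.bdd_mul ((integrable_const (1:ℝ)).add ((hg_int (n+1)).const_mul (l^2/2)))
          ((hW_sm.mono (hle n)).aestronglyMeasurable) hW_bd
      have hstep' : μ[Y|𝔉 n] ≤ᵐ[μ] fun ω => 1 + l^2/2 * g (n+1) ω := by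
        have := hstep (n+1) (by omega)
        simpa using this
      calc ∫ ω, Real.exp (T (n+1) ω) ∂μ = ∫ ω, W ω * Y ω ∂μ := by rw [hZY]
        _ = ∫ ω, (μ[fun ω' => W ω' * Y ω'|𝔉 n]) ω ∂μ := (integral_condExp (hle n)).symm
        _ = ∫ ω, W ω * (μ[Y|𝔉 n]) ω ∂μ := integral_congr_ae hpull
        _ ≤ ∫ ω, W ω * (1 + l^2/2 * g (n+1) ω) ∂μ := by
            refine integral_mono_ae int1 int2 ?_
            filter_upwards [hstep'] with ω hω
            exact mul_le_mul_of_nonneg_left hω (le_of_lt (Real.exp_pos _))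
        _ ≤ ∫ ω, Real.exp (T n ω) ∂μ := by
            refine integral_mono int2 (hZ_int n) (fun ω => ?_)
            have h1 : 1 + l^2/2 * g (n+1) ω ≤ Real.exp (l^2/2 * g (n+1) ω) := by
              have := Real.add_one_le_exp (l^2/2 * g (n+1) ω); linarith
            have h2 : W ω * Real.exp (l^2/2 * g (n+1) ω) = Real.exp (T n ω) := by
              rw [hW, ← Real.exp_add]; ring_nf
            calc W ω * (1 + l^2/2 * g (n+1) ω) ≤ W ω * Real.exp (l^2/2 * g (n+1) ω) :=
                mul_le_mul_of_nonneg_left h1 (le_of_lt (Real.exp_pos _))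
              _ = Real.exp (T n ω) := h2
        _ ≤ 1 := ih
  exact ⟨hZ_int n, main n⟩

lemma aux_slice (γ : ℝ) (hγ : 1 ≤ γ) : ∀ K : ℕ, 1 ≤ K → ∀ u : ℝ, 1 ≤ u → u ≤ γ^K →
    ∃ k, k < K ∧ γ^k ≤ u ∧ u ≤ γ^(k+1) := by
  intro K
  induction K with
  | zero => omega
  | succ K ih =>
    intro _ u hu1 hu2
    rcases Nat.eq_zero_or_pos K with hK0 | hKpos
    · subst hK0
      exact ⟨0, by omega, by simpa using hu1, by simpa using hu2⟩
    rcases le_or_gt u (γ^K) with h | h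
    · obtain ⟨k, hk, h1, h2⟩ := ih hKpos u hu1 h
      exact ⟨k, by omega, h1, h2⟩
    · exact ⟨K, by omega, h.le, hu2⟩



lemma aux_arith (x v t : ℝ) (hx : 0 < x) (hv : 0 < v) (ht : t ≤ v)
    (htγ : x * (1 - t/v) ≤ 1) :
    x^2/2 - 1/2 ≤ (x/v) * (x * t) - (x/v)^2/2 * t^2 := by
  have hs1 : t/v ≤ 1 := (div_le_one hv).2 ht
  have h6 : (x * (1 - t/v))^2 ≤ 1 := by
    nlinarith [mul_nonneg hx.le (by linarith : (0:ℝ) ≤ 1 - t/v)]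
  have hexp : (x/v) * (x * t) - (x/v)^2/2 * t^2 = x^2 * (t/v) - x^2 * (t/v)^2/2 := by
    field_simp
  rw [hexp]
  nlinarith [h6]

set_option maxHeartbeats 1000000 in
theorem stmt_11 {Ω : Type*} {m : MeasurableSpace Ω} {μ : Measure Ω} [IsProbabilityMeasure μ]
    (𝔉 : ℕ → MeasurableSpace Ω) (hle : ∀ i, 𝔉 i ≤ m) (hmono : Monotone 𝔉)
    (ξ : ℕ → Ω → ℝ)
    (hadp : ∀ i, StronglyMeasurable[𝔉 i] (ξ i))
    (hsq : ∀ i, Integrable (fun ω => (ξ i ω) ^ 2) μ)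
    (hmart : ∀ i : ℕ, 1 ≤ i → μ[ξ i | 𝔉 (i - 1)] =ᵐ[μ] 0)
    (n : ℕ) (x b M : ℝ) (hx : 0 < x) (hb : 0 < b) (hM : 1 ≤ M)
    (S B : Ω → ℝ)
    (hS : S = fun ω => ∑ i ∈ Finset.Icc 1 n, ξ i ω)
    (hB : B = fun ω =>
      (∑ i ∈ Finset.Icc 1 n, (max (ξ i ω) 0) ^ 2)
        + ∑ i ∈ Finset.Icc 1 n,
            (μ[fun ω' => (max (-(ξ i ω')) 0) ^ 2 | 𝔉 (i - 1)]) ω) :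
    (μ {ω | x * Real.sqrt (B ω) ≤ S ω ∧ b ≤ Real.sqrt (B ω) ∧ Real.sqrt (B ω) ≤ b * M}).toReal ≤
      Real.sqrt (Real.exp 1) * (1 + 2 * (1 + x) * Real.log M) *
        Real.exp (-x ^ 2 / 2) := by
  have hx1 : (0:ℝ) < 1 + x := by linarith
  set c : ℝ := 1/(2*(1+x)) with hc
  have hc_pos : 0 < c := by positivity
  set γ : ℝ := Real.exp c with hγdef
  have hγ1 : 1 < γ := by
    have := Real.exp_lt_exp.2 hc_pos
    rwa [Real.exp_zero] at this
  have hγ0 : 0 < γ := lt_trans one_pos hγ1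
  set K : ℕ := max (Nat.ceil (2*(1+x)*Real.log M)) 1 with hK
  have hK1 : 1 ≤ K := le_max_right _ _
  have hlogM : 0 ≤ Real.log M := Real.log_nonneg hM
  have hγK : M ≤ γ^K := by
    have h1 : 2*(1+x)*Real.log M ≤ (K:ℝ) := by
      calc 2*(1+x)*Real.log M ≤ (Nat.ceil (2*(1+x)*Real.log M) : ℝ) := Nat.le_ceil _
        _ ≤ (K:ℝ) := by exact_mod_cast le_max_left _ _
    have h2 : Real.log M ≤ (K:ℝ) * c := by
      rw [hc, mul_one_div, le_div_iff₀ (by positivity : (0:ℝ) < 2*(1+x))]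
      nlinarith
    calc M = Real.exp (Real.log M) := (Real.exp_log (by linarith)).symm
      _ ≤ Real.exp ((K:ℝ) * c) := Real.exp_le_exp.2 h2
      _ = γ^K := by rw [hγdef, ← Real.exp_nat_mul]
  have hKle : (K:ℝ) ≤ 1 + 2*(1+x)*Real.log M := by
    have h1 : (Nat.ceil (2*(1+x)*Real.log M) : ℝ) ≤ 2*(1+x)*Real.log M + 1 :=
      (Nat.ceil_lt_add_one (by positivity)).le
    have h0 : (0:ℝ) ≤ 2*(1+x)*Real.log M := by positivity
    rw [hK, Nat.cast_max]
    apply max_le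
    · linarith
    · norm_num; linarith
  -- the exponential supermartingale bound
  have key : ∀ l : ℝ, 0 ≤ l →
      Integrable (fun ω => Real.exp (l * S ω - l^2/2 * B ω)) μ ∧
      ∫ ω, Real.exp (l * S ω - l^2/2 * B ω) ∂μ ≤ 1 := by
    intro l hl
    have h := aux_sup 𝔉 hle hmono ξ hadp hsq hmart l hl n
    simp only [hS, hB]
    exact h
  -- slice sets
  set A : ℕ → Set Ω := fun k => {ω | x * Real.sqrt (B ω) ≤ S ω ∧
    b * γ^k ≤ Real.sqrt (B ω) ∧ Real.sqrt (B ω) ≤ b * γ^(k+1)} with hA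
  -- key inequality for gamma
  have hxγ : x * (1 - γ⁻¹) ≤ 1 := by
    have h1 : 1 - c ≤ γ⁻¹ := by
      rw [hγdef, ← Real.exp_neg]
      have := Real.add_one_le_exp (-c)
      linarith
    have h2 : x * (1 - γ⁻¹) ≤ x * c := by
      apply mul_le_mul_of_nonneg_left _ hx.le
      linarith
    have h3 : x * c ≤ 1 := by
      rw [hc, mul_one_div, div_le_one (by positivity)]
      linarith
    linarith
  -- per-slice bound
  have hslice : ∀ k : ℕ, (μ (A k)).toReal ≤ Real.exp (1/2) * Real.exp (-x^2/2) := by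
    intro k
    obtain ⟨v, hv⟩ : ∃ v, v = b * γ^(k+1) := ⟨_, rfl⟩
    have hv0 : 0 < v := by rw [hv]; positivity
    obtain ⟨hint, hle1⟩ := key (x/v) (by positivity)
    have hsub : A k ⊆
        {ω | Real.exp (x^2/2 - 1/2) ≤ Real.exp ((x/v) * S ω - (x/v)^2/2 * B ω)} := by
      rintro ω ⟨h1, h2, h3⟩
      have h3' : Real.sqrt (B ω) ≤ v := by rw [hv]; exact h3
      have hbγ : (0:ℝ) < b * γ^k := by positivity
      have hB0 : 0 ≤ B ω := by
        by_contra hcon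
        push_neg at hcon
        have h0 : Real.sqrt (B ω) = 0 := Real.sqrt_eq_zero_of_nonpos hcon.le
        rw [h0] at h2
        linarith
      have hBt : Real.sqrt (B ω)^2 = B ω := Real.sq_sqrt hB0
      simp only [Set.mem_setOf_eq]
      apply Real.exp_le_exp.2
      have hfrac : x * (1 - Real.sqrt (B ω)/v) ≤ 1 := by
        have hveq : γ⁻¹ * v = b * γ^k := by
          rw [hv, pow_succ]
          field_simp
        have hsv : γ⁻¹ ≤ Real.sqrt (B ω)/v := by
          rw [le_div_iff₀ hv0]
          rw [hveq]
          exact h2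
        have hm : x * (1 - Real.sqrt (B ω)/v) ≤ x * (1 - γ⁻¹) :=
          mul_le_mul_of_nonneg_left (by linarith) hx.le
        linarith
      have harith := aux_arith x v (Real.sqrt (B ω)) hx hv0 h3' hfrac
      rw [hBt] at harith
      have h7 : (x/v) * (x * Real.sqrt (B ω)) ≤ (x/v) * S ω :=
        mul_le_mul_of_nonneg_left h1 (by positivity)
      linarith
    have hexp_pos : (0:ℝ) < Real.exp (x^2/2 - 1/2) := Real.exp_pos _
    have hmk := mul_meas_ge_le_integral_of_nonneg
      (ae_of_all _ fun ω => (Real.exp_pos _).le) hint (Real.exp (x^2/2 - 1/2))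
    have hm1 : (μ (A k)).toReal ≤
        (μ {ω | Real.exp (x^2/2 - 1/2) ≤ Real.exp ((x/v) * S ω - (x/v)^2/2 * B ω)}).toReal :=
      ENNReal.toReal_mono (measure_ne_top μ _) (measure_mono hsub)
    have hm2 : (μ {ω | Real.exp (x^2/2 - 1/2) ≤
        Real.exp ((x/v) * S ω - (x/v)^2/2 * B ω)}).toReal
        ≤ 1 / Real.exp (x^2/2 - 1/2) := by
      rw [le_div_iff₀ hexp_pos]
      calc (μ _).toReal * Real.exp (x^2/2 - 1/2)
          = Real.exp (x^2/2 - 1/2) * (μ _).toReal := by ring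
        _ ≤ ∫ ω, Real.exp ((x/v) * S ω - (x/v)^2/2 * B ω) ∂μ := hmk
        _ ≤ 1 := hle1
    have hm3 : 1 / Real.exp (x^2/2 - 1/2) = Real.exp (1/2) * Real.exp (-x^2/2) := by
      rw [one_div, ← Real.exp_neg, ← Real.exp_add]
      ring_nf
    linarith
  -- cover
  have hcov : {ω | x * Real.sqrt (B ω) ≤ S ω ∧ b ≤ Real.sqrt (B ω) ∧ Real.sqrt (B ω) ≤ b * M}
      ⊆ ⋃ k ∈ Finset.range K, A k := by
    rintro ω ⟨h1, h2, h3⟩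
    have hu1 : 1 ≤ Real.sqrt (B ω) / b := (le_div_iff₀ hb).2 (by linarith)
    have hu2 : Real.sqrt (B ω) / b ≤ γ^K := by
      rw [div_le_iff₀ hb]
      have : b * M ≤ b * γ^K := mul_le_mul_of_nonneg_left hγK hb.le
      linarith
    obtain ⟨k, hk, hk1, hk2⟩ := aux_slice γ hγ1.le K hK1 _ hu1 hu2
    refine Set.mem_biUnion (Finset.mem_range.2 hk) ?_
    refine ⟨h1, ?_, ?_⟩
    · have := (le_div_iff₀ hb).1 hk1
      linarith
    · have := (div_le_iff₀ hb).1 hk2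
      linarith
  have hexp2 : (0:ℝ) ≤ Real.exp (1/2) * Real.exp (-x^2/2) := by positivity
  have hsqrt_e : Real.sqrt (Real.exp 1) = Real.exp (1/2) := by
    have h : Real.exp (1/2) * Real.exp (1/2) = Real.exp 1 := by
      rw [← Real.exp_add]; norm_num
    rw [← h, Real.sqrt_mul_self (Real.exp_pos _).le]
  calc (μ {ω | x * Real.sqrt (B ω) ≤ S ω ∧ b ≤ Real.sqrt (B ω) ∧ Real.sqrt (B ω) ≤ b * M}).toReal
      ≤ (μ (⋃ k ∈ Finset.range K, A k)).toReal :=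
        ENNReal.toReal_mono (measure_ne_top μ _) (measure_mono hcov)
    _ ≤ (∑ k ∈ Finset.range K, μ (A k)).toReal := by
        apply ENNReal.toReal_mono
        · exact (ENNReal.sum_lt_top.2 fun k _ => measure_lt_top μ _).ne
        · exact measure_biUnion_finset_le _ _
    _ = ∑ k ∈ Finset.range K, (μ (A k)).toReal :=
        ENNReal.toReal_sum (fun k _ => measure_ne_top μ _)
    _ ≤ ∑ _k ∈ Finset.range K, Real.exp (1/2) * Real.exp (-x^2/2) :=
        Finset.sum_le_sum (fun k _ => hslice k)
    _ = (K:ℝ) * (Real.exp (1/2) * Real.exp (-x^2/2)) := by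
        rw [Finset.sum_const, Finset.card_range, nsmul_eq_mul]
    _ ≤ (1 + 2*(1+x)*Real.log M) * (Real.exp (1/2) * Real.exp (-x^2/2)) :=
        mul_le_mul_of_nonneg_right hKle hexp2
    _ = Real.sqrt (Real.exp 1) * (1 + 2 * (1 + x) * Real.log M) * Real.exp (-x ^ 2 / 2) := by
        rw [hsqrt_e]
        ring_nf
end

section
/- Let (ξ_i, 𝔉_i) be square-integrable martingale differences such that each ξ_i is heavy on left, i.e. E[ξ_i | 𝔉_{i-1}] = 0 and E[min(|ξ_i|, a) sign(ξ_i) | 𝔉_{i-1}] ≤ 0 for all a > 0. Let S_n = Σ ξ_i and [S]_n = Σ ξ_i². Then for all b > 0, M ≥ 1 and x > 0, P(S_n ≥ x √([S]_n), b ≤ √([S]_n) ≤ bM) ≤ √e (1 + 2(1+x) ln M) exp{- x²/2}. -/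
open MeasureTheory Real Finset intervalIntegral


noncomputable def wgt (a : ℝ) : ℝ := (2*a - a^2) * Real.exp (a - a^2/2)
noncomputable def clampT (a y : ℝ) : ℝ := max (-a) (min y a)

lemma hasDerivAt_F (a : ℝ) :
    HasDerivAt (fun t => (1 - t + t^2) * Real.exp (t - t^2/2) - 1) (a * wgt a) a := by
  have h1 : HasDerivAt (fun t : ℝ => 1 - t + t^2) (-1 + 2*a) a := by
    exact (((hasDerivAt_id' a).const_sub 1).add (hasDerivAt_pow 2 a)).congr_deriv (by norm_num)
  have h2 : HasDerivAt (fun t : ℝ => Real.exp (t - t^2/2)) ((1 - a) * Real.exp (a - a^2/2)) a := by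
    have : HasDerivAt (fun t : ℝ => t - t^2/2) (1 - a) a := by
      exact ((hasDerivAt_id' a).sub ((hasDerivAt_pow 2 a).div_const 2)).congr_deriv (by norm_num)
    simpa [mul_comm] using this.exp
  have := (h1.mul h2).sub_const 1
  refine this.congr_deriv ?_
  unfold wgt; ring

lemma hasDerivAt_W (a : ℝ) :
    HasDerivAt (fun t => (t - 1) * Real.exp (t - t^2/2)) (wgt a) a := by
  have h1 : HasDerivAt (fun t : ℝ => t - 1) 1 a := (hasDerivAt_id a).sub_const 1
  have h2 : HasDerivAt (fun t : ℝ => Real.exp (t - t^2/2)) ((1 - a) * Real.exp (a - a^2/2)) a := by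
    have : HasDerivAt (fun t : ℝ => t - t^2/2) (1 - a) a := by
      exact ((hasDerivAt_id' a).sub ((hasDerivAt_pow 2 a).div_const 2)).congr_deriv (by norm_num)
    simpa [mul_comm] using this.exp
  have := h1.mul h2
  refine this.congr_deriv ?_
  unfold wgt; ring

lemma cont_integrand (y : ℝ) : Continuous fun a => wgt a * clampT a y := by
  unfold wgt clampT
  fun_prop

lemma int_awgt (p q : ℝ) : ∫ a in p..q, a * wgt a =
    ((1 - q + q^2) * Real.exp (q - q^2/2) - 1) - ((1 - p + p^2) * Real.exp (p - p^2/2) - 1) := by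
  apply intervalIntegral.integral_eq_sub_of_hasDerivAt (fun t _ => hasDerivAt_F t)
  exact (by unfold wgt; fun_prop : Continuous fun a : ℝ => a * wgt a).intervalIntegrable p q

lemma int_wgt (p q : ℝ) : ∫ a in p..q, wgt a =
    (q - 1) * Real.exp (q - q^2/2) - (p - 1) * Real.exp (p - p^2/2) := by
  apply intervalIntegral.integral_eq_sub_of_hasDerivAt (fun t _ => hasDerivAt_W t)
  exact (by unfold wgt; fun_prop : Continuous wgt).intervalIntegrable p q

lemma exp_half_lt : Real.exp (2⁻¹) < 1.6488 := by
  have h := Real.exp_one_lt_d9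
  have h2 : Real.exp (2⁻¹) ^ 2 = Real.exp 1 := by
    rw [← Real.exp_nat_mul]; norm_num
  nlinarith [Real.exp_pos (2⁻¹ : ℝ)]

lemma exp_half_gt : (1.6487 : ℝ) < Real.exp (2⁻¹) := by
  have h := Real.exp_one_gt_d9
  have h2 : Real.exp (2⁻¹) ^ 2 = Real.exp 1 := by
    rw [← Real.exp_nat_mul]; norm_num
  nlinarith [Real.exp_pos (2⁻¹ : ℝ)]

/-- The key pointwise inequality. -/
lemma key_pointwise (y : ℝ) :
    Real.exp (y - y^2/2) ≤ 1 + ∫ a in (0:ℝ)..1, wgt a * clampT a y := by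
  rcases le_or_gt 1 y with hy | hy
  · have hcong : ∫ a in (0:ℝ)..1, wgt a * clampT a y = ∫ a in (0:ℝ)..1, a * wgt a := by
      apply intervalIntegral.integral_congr
      intro a ha
      rw [Set.uIcc_of_le (by norm_num)] at ha
      show wgt a * clampT a y = a * wgt a
      unfold clampT
      rw [min_eq_right (le_trans ha.2 hy), max_eq_right (by linarith [ha.1, ha.2])]
      ring
    rw [hcong, int_awgt]
    have h1 : Real.exp (y - y^2/2) ≤ Real.exp (2⁻¹) := by
      apply Real.exp_le_exp.2; nlinarith
    have e1 : (1:ℝ) - 1^2/2 = 2⁻¹ := by norm_num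
    have e0 : (0:ℝ) - 0^2/2 = 0 := by norm_num
    rw [e1, e0, Real.exp_zero]
    nlinarith
  rcases le_or_gt 0 y with hy0 | hy0
  · have hsplit : ∫ a in (0:ℝ)..1, wgt a * clampT a y =
        (∫ a in (0:ℝ)..y, wgt a * clampT a y) + ∫ a in y..1, wgt a * clampT a y :=
      (intervalIntegral.integral_add_adjacent_intervals
        ((cont_integrand y).intervalIntegrable _ _)
        ((cont_integrand y).intervalIntegrable _ _)).symm
    have h1 : ∫ a in (0:ℝ)..y, wgt a * clampT a y = ∫ a in (0:ℝ)..y, a * wgt a := by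
      apply intervalIntegral.integral_congr
      intro a ha
      rw [Set.uIcc_of_le hy0] at ha
      show wgt a * clampT a y = a * wgt a
      unfold clampT
      rw [min_eq_right ha.2, max_eq_right (by linarith [ha.1, ha.2])]
      ring
    have h2 : ∫ a in y..1, wgt a * clampT a y = ∫ a in y..1, y * wgt a := by
      apply intervalIntegral.integral_congr
      intro a ha
      rw [Set.uIcc_of_le hy.le] at ha
      show wgt a * clampT a y = y * wgt a
      unfold clampT
      rw [min_eq_left ha.1, max_eq_right (by linarith [ha.1, ha.2])]
      ring
    rw [hsplit, h1, h2, intervalIntegral.integral_const_mul, int_awgt, int_wgt]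
    ring_nf
    simp only [Real.exp_zero]
    linarith
  rcases le_or_gt (-1:ℝ) y with hy1 | hy1
  · have hsplit : ∫ a in (0:ℝ)..1, wgt a * clampT a y =
        (∫ a in (0:ℝ)..(-y), wgt a * clampT a y) + ∫ a in (-y)..1, wgt a * clampT a y :=
      (intervalIntegral.integral_add_adjacent_intervals
        ((cont_integrand y).intervalIntegrable _ _)
        ((cont_integrand y).intervalIntegrable _ _)).symm
    have h1 : ∫ a in (0:ℝ)..(-y), wgt a * clampT a y = ∫ a in (0:ℝ)..(-y), -(a * wgt a) := by
      apply intervalIntegral.integral_congr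
      intro a ha
      rw [Set.uIcc_of_le (by linarith)] at ha
      show wgt a * clampT a y = -(a * wgt a)
      unfold clampT
      rw [min_eq_left (by linarith [ha.1]), max_eq_left (by linarith [ha.2])]
      ring
    have h2 : ∫ a in (-y)..1, wgt a * clampT a y = ∫ a in (-y)..1, y * wgt a := by
      apply intervalIntegral.integral_congr
      intro a ha
      rw [Set.uIcc_of_le (by linarith)] at ha
      show wgt a * clampT a y = y * wgt a
      unfold clampT
      rw [min_eq_left (by linarith [ha.1]), max_eq_right (by linarith [ha.1])]
      ring
    rw [hsplit, h1, h2, intervalIntegral.integral_neg, intervalIntegral.integral_const_mul,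
      int_awgt, int_wgt]
    have hcosh : Real.exp (y - y^2/2) + Real.exp (-y - y^2/2) ≤ 2 := by
      have hc := Real.cosh_le_exp_half_sq y
      rw [Real.cosh_eq] at hc
      have hh : Real.exp y + Real.exp (-y) ≤ 2 * Real.exp (y^2/2) := by linarith
      have e1 : Real.exp (y - y^2/2) = Real.exp y * Real.exp (-(y^2/2)) := by
        rw [← Real.exp_add]; ring_nf
      have e2 : Real.exp (-y - y^2/2) = Real.exp (-y) * Real.exp (-(y^2/2)) := by
        rw [← Real.exp_add]; ring_nf
      have e3 : Real.exp (y^2/2) * Real.exp (-(y^2/2)) = 1 := by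
        rw [← Real.exp_add]; simp
      nlinarith [Real.exp_pos (-(y^2/2)), Real.exp_pos (y^2/2)]
    ring_nf
    simp only [Real.exp_zero]
    ring_nf at hcosh
    linarith
  · have hcong : ∫ a in (0:ℝ)..1, wgt a * clampT a y = ∫ a in (0:ℝ)..1, -(a * wgt a) := by
      apply intervalIntegral.integral_congr
      intro a ha
      rw [Set.uIcc_of_le (by norm_num)] at ha
      show wgt a * clampT a y = -(a * wgt a)
      unfold clampT
      rw [min_eq_left (by linarith [ha.1]), max_eq_left (by linarith [ha.2])]
      ring
    rw [hcong, intervalIntegral.integral_neg, int_awgt]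
    have h1 : Real.exp (y - y^2/2) ≤ Real.exp (-(3/2)) := by
      apply Real.exp_le_exp.2; nlinarith
    have h2 : Real.exp (-(3/2)) * Real.exp (2⁻¹) ^ 3 = 1 := by
      rw [← Real.exp_nat_mul, ← Real.exp_add]; norm_num
    have h3 := exp_half_gt
    have h4 := exp_half_lt
    have hs3 : (1.6487:ℝ)^3 < Real.exp (2⁻¹) ^ 3 :=
      pow_lt_pow_left₀ h3 (by norm_num) (by norm_num)
    have h5 : Real.exp (-(3/2)) ≤ 0.224 := by
      nlinarith [Real.exp_pos (-(3/2):ℝ), Real.exp_pos (2⁻¹:ℝ)]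
    have e1 : (1:ℝ) - 1^2/2 = 2⁻¹ := by norm_num
    have e0 : (0:ℝ) - 0^2/2 = 0 := by norm_num
    rw [e1, e0, Real.exp_zero]
    nlinarith

lemma wgt_nonneg {a : ℝ} (h0 : 0 ≤ a) (h1 : a ≤ 1) : 0 ≤ wgt a := by
  unfold wgt
  have h := Real.exp_pos (a - a^2/2)
  have hq : 0 ≤ 2*a - a^2 := by nlinarith
  exact mul_nonneg hq h.le

lemma wgt_le_two {a : ℝ} (h0 : 0 ≤ a) (h1 : a ≤ 1) : wgt a ≤ 2 := by
  unfold wgt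
  have h2 : Real.exp (a - a^2/2) ≤ Real.exp 2⁻¹ := by
    apply Real.exp_le_exp.2; nlinarith
  have h3 := exp_half_lt
  have h := Real.exp_pos (a - a^2/2)
  have hq : 2*a - a^2 ≤ 1 := by nlinarith
  have := mul_le_mul_of_nonneg_right hq h.le
  nlinarith

lemma clampT_abs_le {a y : ℝ} (h0 : 0 ≤ a) : |clampT a y| ≤ a := by
  unfold clampT
  rw [abs_le]
  constructor
  · exact le_max_left _ _
  · exact max_le (by linarith) (le_trans (min_le_right _ _) le_rfl)

lemma clampT_scale {lam a t : ℝ} (hl : 0 < lam) (ha : 0 ≤ a) :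
    clampT a (lam * t) = lam * (min |t| (a / lam) * Real.sign t) := by
  rcases lt_trichotomy t 0 with h | h | h
  · rw [Real.sign_of_neg h, abs_of_neg h]
    rcases le_total (a / lam) (-t) with h2 | h2
    · rw [min_eq_right h2]
      rw [div_le_iff₀ hl] at h2
      unfold clampT
      rw [min_eq_left (by nlinarith : lam * t ≤ a), max_eq_left (by nlinarith : lam * t ≤ -a)]
      field_simp
      try ring
    · rw [min_eq_left h2]
      rw [le_div_iff₀ hl] at h2
      unfold clampT
      rw [min_eq_left (by nlinarith : lam * t ≤ a), max_eq_right (by nlinarith : -a ≤ lam * t)]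
      ring
  · subst h
    simp [clampT, Real.sign_zero, min_eq_left ha, max_eq_right (neg_nonpos.mpr ha)]
  · rw [Real.sign_of_pos h, abs_of_pos h]
    rcases le_total (a / lam) t with h2 | h2
    · rw [min_eq_right h2]
      rw [div_le_iff₀ hl] at h2
      unfold clampT
      rw [min_eq_right (by nlinarith : a ≤ lam * t), max_eq_right (by nlinarith : -a ≤ a)]
      field_simp
      try ring
    · rw [min_eq_left h2]
      rw [le_div_iff₀ hl] at h2
      unfold clampT
      rw [min_eq_left (by nlinarith : lam * t ≤ a), max_eq_right (by nlinarith : -a ≤ lam * t)]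
      ring

lemma wgt_continuous : Continuous wgt := by unfold wgt; fun_prop

lemma sign_abs_le (t : ℝ) : |Real.sign t| ≤ 1 := by
  rcases lt_trichotomy t 0 with h | h | h
  · rw [Real.sign_of_neg h]; norm_num
  · subst h; rw [Real.sign_zero]; norm_num
  · rw [Real.sign_of_pos h]; norm_num

lemma stepB {Ω : Type*} {m' : MeasurableSpace Ω} {m : MeasurableSpace Ω} {μ : Measure Ω}
    [IsProbabilityMeasure μ] (hm' : m' ≤ m)
    {ζ : Ω → ℝ} (hζ : Measurable ζ)
    (hhv : ∀ a : ℝ, 0 < a →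
      (μ[fun ω => min |ζ ω| a * Real.sign (ζ ω) | m']) ≤ᵐ[μ] fun _ => (0:ℝ))
    {lam : ℝ} (hlam : 0 < lam)
    {Z : Ω → ℝ} (hZm : StronglyMeasurable[m'] Z) (hZ0 : ∀ ω, 0 ≤ Z ω) {C : ℝ} (hC0 : 0 ≤ C)
    (hZC : ∀ ω, Z ω ≤ C) :
    ∫ ω, Z ω * Real.exp (lam * ζ ω - lam^2 * (ζ ω)^2 / 2) ∂μ ≤ ∫ ω, Z ω ∂μ := by
  have hZmeas : Measurable Z := (hZm.mono hm').measurable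
  set ν : Measure ℝ := volume.restrict (Set.Ioc (0:ℝ) 1) with hν
  haveI : IsFiniteMeasure ν := ⟨by
    rw [hν, Measure.restrict_apply_univ, Real.volume_Ioc]; norm_num⟩
  -- the inner integral as a set integral
  set GG : Ω → ℝ := fun ω => ∫ a, wgt a * clampT a (lam * ζ ω) ∂ν with hGG
  have hGG_eq : ∀ ω, (∫ a in (0:ℝ)..1, wgt a * clampT a (lam * ζ ω)) = GG ω := by
    intro ω
    rw [intervalIntegral.integral_of_le (by norm_num : (0:ℝ) ≤ 1)]
  -- measurability of the joint map
  have hψ : Measurable (fun p : Ω × ℝ => wgt p.2 * clampT p.2 (lam * ζ p.1)) := by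
    apply ((wgt_continuous.measurable).comp measurable_snd).mul
    unfold clampT
    exact Measurable.max measurable_snd.neg
      (Measurable.min (((hζ.comp measurable_fst)).const_mul lam) measurable_snd)
  have hGGsm : StronglyMeasurable GG := by
    exact (hψ.stronglyMeasurable).integral_prod_right'
  -- bound on GG
  have hGG_bd : ∀ ω, |GG ω| ≤ 2 := by
    intro ω
    have h1 : ∀ᵐ a ∂ν, ‖wgt a * clampT a (lam * ζ ω)‖ ≤ 2 := by
      filter_upwards [ae_restrict_mem measurableSet_Ioc] with a ha
      have hw0 := wgt_nonneg ha.1.le ha.2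
      have hw2 := wgt_le_two ha.1.le ha.2
      have hc := clampT_abs_le (y := lam * ζ ω) ha.1.le
      rw [norm_mul, Real.norm_eq_abs, Real.norm_eq_abs, abs_of_nonneg hw0]
      have := abs_nonneg (clampT a (lam * ζ ω))
      nlinarith [ha.2]
    have h2 := norm_integral_le_of_norm_le_const h1
    rw [← Real.norm_eq_abs]
    refine h2.trans ?_
    have : (ν Set.univ).toReal = 1 := by
      rw [hν, Measure.restrict_apply_univ, Real.volume_Ioc]; norm_num
    rw [measureReal_def, this]; norm_num
  -- integrability facts
  have hexp_bd : ∀ ω, Real.exp (lam * ζ ω - lam^2 * (ζ ω)^2 / 2) ≤ 2 := by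
    intro ω
    have h1 : Real.exp (lam * ζ ω - lam^2 * (ζ ω)^2/2) ≤ Real.exp 2⁻¹ := by
      apply Real.exp_le_exp.2; nlinarith [sq_nonneg (lam * ζ ω - 1)]
    have := exp_half_lt
    linarith
  have hintZ : Integrable Z μ := by
    refine (integrable_const C).mono' hZmeas.aestronglyMeasurable (ae_of_all _ fun ω => ?_)
    rw [Real.norm_eq_abs, abs_of_nonneg (hZ0 ω)]; exact hZC ω
  have hint1 : Integrable (fun ω => Z ω * Real.exp (lam * ζ ω - lam^2 * (ζ ω)^2 / 2)) μ := by
    refine (integrable_const (C * 2)).mono'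
      ((hZmeas.mul ((((hζ.const_mul lam).sub (((hζ.pow_const 2).const_mul (lam^2)).div_const 2)).exp))).aestronglyMeasurable)
      (ae_of_all _ fun ω => ?_)
    rw [Real.norm_eq_abs, abs_mul, abs_of_nonneg (hZ0 ω), abs_of_nonneg (Real.exp_pos _).le]
    exact mul_le_mul (hZC ω) (hexp_bd ω) (Real.exp_pos _).le hC0
  have hintZGG : Integrable (fun ω => Z ω * GG ω) μ := by
    refine (integrable_const (C * 2)).mono'
      ((hZm.mono hm').mul hGGsm).aestronglyMeasurable (ae_of_all _ fun ω => ?_)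
    rw [Real.norm_eq_abs, abs_mul, abs_of_nonneg (hZ0 ω)]
    exact mul_le_mul (hZC ω) (hGG_bd ω) (abs_nonneg _) hC0
  have hint2 : Integrable (fun ω => Z ω * (1 + GG ω)) μ := by
    have : (fun ω => Z ω * (1 + GG ω)) = fun ω => Z ω + Z ω * GG ω := by
      funext ω; ring
    rw [this]; exact hintZ.add hintZGG
  -- main chain
  have step1 : ∫ ω, Z ω * Real.exp (lam * ζ ω - lam^2 * (ζ ω)^2 / 2) ∂μ ≤
      ∫ ω, Z ω * (1 + GG ω) ∂μ := by
    refine integral_mono hint1 hint2 fun ω => ?_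
    have harg : lam * ζ ω - lam^2 * (ζ ω)^2/2 = (lam * ζ ω) - (lam * ζ ω)^2/2 := by ring
    rw [harg]
    have := key_pointwise (lam * ζ ω)
    rw [hGG_eq ω] at this
    exact mul_le_mul_of_nonneg_left this (hZ0 ω)
  have step2 : ∫ ω, Z ω * (1 + GG ω) ∂μ = (∫ ω, Z ω ∂μ) + ∫ ω, Z ω * GG ω ∂μ := by
    have : (fun ω => Z ω * (1 + GG ω)) = fun ω => Z ω + Z ω * GG ω := by
      funext ω; ring
    rw [this, integral_add hintZ hintZGG]
  -- the crucial nonpositivity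
  have step3 : ∫ ω, Z ω * GG ω ∂μ ≤ 0 := by
    -- Fubini
    have hmem : ∀ᵐ p ∂(μ.prod ν), p.2 ∈ Set.Ioc (0:ℝ) 1 := by
      have hz : (μ.prod ν) ((Set.univ : Set Ω) ×ˢ (Set.Ioc (0:ℝ) 1)ᶜ) = 0 := by
        rw [Measure.prod_prod, hν, Measure.restrict_apply measurableSet_Ioc.compl]
        simp
      have := measure_eq_zero_iff_ae_notMem.mp hz
      filter_upwards [this] with p hp
      simpa [Set.mem_prod] using hp
    have hprodint : Integrable
        (Function.uncurry fun ω a => Z ω * (wgt a * clampT a (lam * ζ ω))) (μ.prod ν) := by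
      refine (integrable_const (C * 2)).mono'
        (((hZmeas.comp measurable_fst).mul hψ).aestronglyMeasurable) ?_
      filter_upwards [hmem] with p hp
      have hw0 := wgt_nonneg hp.1.le hp.2
      have hw2 := wgt_le_two hp.1.le hp.2
      have hc := clampT_abs_le (y := lam * ζ p.1) hp.1.le
      simp only [Function.uncurry]
      rw [Real.norm_eq_abs, abs_mul, abs_mul, abs_of_nonneg (hZ0 p.1), abs_of_nonneg hw0]
      have h1 : |clampT p.2 (lam * ζ p.1)| ≤ 1 := hc.trans hp.2
      have h2 : wgt p.2 * |clampT p.2 (lam * ζ p.1)| ≤ 2 * 1 :=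
        mul_le_mul hw2 h1 (abs_nonneg _) (by norm_num)
      have h3 : Z p.1 * (wgt p.2 * |clampT p.2 (lam * ζ p.1)|) ≤ C * (2 * 1) :=
        mul_le_mul (hZC p.1) h2 (mul_nonneg hw0 (abs_nonneg _)) hC0
      linarith
    have hswap : ∫ ω, Z ω * GG ω ∂μ =
        ∫ a, (∫ ω, Z ω * (wgt a * clampT a (lam * ζ ω)) ∂μ) ∂ν := by
      have h1 : ∀ ω, Z ω * GG ω = ∫ a, Z ω * (wgt a * clampT a (lam * ζ ω)) ∂ν := by
        intro ω
        rw [MeasureTheory.integral_const_mul]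
      simp_rw [h1]
      exact integral_integral_swap hprodint
    rw [hswap]
    apply integral_nonpos_of_ae
    filter_upwards [ae_restrict_mem measurableSet_Ioc] with a ha
    -- inner integral nonpositive for each a ∈ (0,1]
    have hinner : ∫ ω, Z ω * clampT a (lam * ζ ω) ∂μ ≤ 0 := by
      have hc : 0 < a / lam := div_pos ha.1 hlam
      have hclamp : ∀ ω, clampT a (lam * ζ ω) =
          lam * (min |ζ ω| (a/lam) * Real.sign (ζ ω)) := fun ω => clampT_scale hlam ha.1.le
      set g : Ω → ℝ := fun ω => min |ζ ω| (a/lam) * Real.sign (ζ ω) with hg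
      have hg_meas : Measurable g := by
        have hg_eq : g = fun ω => lam⁻¹ * clampT a (lam * ζ ω) := by
          funext ω
          rw [hclamp ω]
          field_simp
          rfl
        rw [hg_eq]
        apply Measurable.const_mul
        unfold clampT
        exact Measurable.max measurable_const.neg
          (Measurable.min (hζ.const_mul lam) measurable_const)
      have hg_int : Integrable g μ := by
        refine (integrable_const (a/lam)).mono' hg_meas.aestronglyMeasurable
          (ae_of_all _ fun ω => ?_)
        rw [Real.norm_eq_abs, hg, abs_mul]
        have h1 : |min |ζ ω| (a/lam)| ≤ a/lam := by
          rw [abs_of_nonneg (le_min (abs_nonneg _) hc.le)]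
          exact min_le_right _ _
        have h2 := sign_abs_le (ζ ω)
        nlinarith [abs_nonneg (min |ζ ω| (a/lam)), abs_nonneg (Real.sign (ζ ω))]
      have hZg_int : Integrable (Z * g) μ := by
        refine (integrable_const (C * (a/lam))).mono'
          ((hZmeas.mul hg_meas).aestronglyMeasurable) (ae_of_all _ fun ω => ?_)
        rw [Pi.mul_apply, Real.norm_eq_abs, abs_mul, abs_of_nonneg (hZ0 ω)]
        have h1 : |g ω| ≤ a/lam := by
          rw [hg, abs_mul]
          have h1 : |min |ζ ω| (a/lam)| ≤ a/lam := by
            rw [abs_of_nonneg (le_min (abs_nonneg _) hc.le)]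
            exact min_le_right _ _
          have h2 := sign_abs_le (ζ ω)
          nlinarith [abs_nonneg (min |ζ ω| (a/lam)), abs_nonneg (Real.sign (ζ ω))]
        exact mul_le_mul (hZC ω) h1 (abs_nonneg _) hC0
      have hpull : μ[Z * g | m'] =ᵐ[μ] Z * μ[g | m'] :=
        condExp_stronglyMeasurable_mul_of_bound hm' hZm hg_int C
          (ae_of_all _ fun ω => by
            rw [Real.norm_eq_abs, abs_of_nonneg (hZ0 ω)]; exact hZC ω)
      have hcond := hhv (a/lam) hc
      have hZg_nonpos : ∫ ω, Z ω * g ω ∂μ ≤ 0 := by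
        have e1 : ∫ ω, Z ω * g ω ∂μ = ∫ ω, (μ[Z * g | m']) ω ∂μ :=
          (integral_condExp hm').symm
        have e2 : ∫ ω, (μ[Z * g | m']) ω ∂μ = ∫ ω, Z ω * (μ[g | m']) ω ∂μ :=
          integral_congr_ae hpull
        rw [e1, e2]
        apply integral_nonpos_of_ae
        filter_upwards [hcond] with ω h1
        have h2 := mul_le_mul_of_nonneg_left h1 (hZ0 ω)
        simpa using h2
      calc ∫ ω, Z ω * clampT a (lam * ζ ω) ∂μ
          = ∫ ω, lam * (Z ω * g ω) ∂μ := by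
            congr 1; funext ω; rw [hclamp ω]; ring
        _ = lam * ∫ ω, Z ω * g ω ∂μ := integral_const_mul _ _
        _ ≤ lam * 0 := mul_le_mul_of_nonneg_left hZg_nonpos hlam.le
        _ = 0 := mul_zero _
    have e3 : ∫ ω, Z ω * (wgt a * clampT a (lam * ζ ω)) ∂μ =
        wgt a * ∫ ω, Z ω * clampT a (lam * ζ ω) ∂μ := by
      rw [← MeasureTheory.integral_const_mul]
      congr 1; funext ω; ring
    rw [e3]
    calc wgt a * ∫ ω, Z ω * clampT a (lam * ζ ω) ∂μ ≤ wgt a * 0 :=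
          mul_le_mul_of_nonneg_left hinner (wgt_nonneg ha.1.le ha.2)
      _ = 0 := mul_zero _
  linarith [step1, step2.le, step2.ge, step3]

lemma exp_term_le (lam t : ℝ) : Real.exp (lam * t - lam^2 * t^2 / 2) ≤ Real.exp 2⁻¹ := by
  apply Real.exp_le_exp.2
  nlinarith [sq_nonneg (lam * t - 1)]

/-- Bercu–Touati type supermartingale bound. -/
lemma superm {Ω : Type*} {m : MeasurableSpace Ω} {μ : Measure Ω} [IsProbabilityMeasure μ]
    (𝔉 : ℕ → MeasurableSpace Ω) (hle : ∀ i, 𝔉 i ≤ m) (hmono : Monotone 𝔉)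
    (ξ : ℕ → Ω → ℝ)
    (hadp : ∀ i, StronglyMeasurable[𝔉 i] (ξ i))
    (hheavy : ∀ i : ℕ, 1 ≤ i → ∀ a : ℝ, 0 < a →
      (μ[fun ω => min |ξ i ω| a * Real.sign (ξ i ω) | 𝔉 (i - 1)]) ≤ᵐ[μ] (fun _ => (0 : ℝ)))
    {lam : ℝ} (hlam : 0 < lam) (k : ℕ) :
    ∫ ω, ∏ i ∈ Finset.Icc 1 k, Real.exp (lam * ξ i ω - lam^2 * (ξ i ω)^2 / 2) ∂μ ≤ 1 := by
  induction k with
  | zero =>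
      simp
  | succ k ih =>
      have hins : Finset.Icc 1 (k+1) = insert (k+1) (Finset.Icc 1 k) := by
        ext j
        simp only [Finset.mem_Icc, Finset.mem_insert]
        omega
      have hnm : (k+1) ∉ Finset.Icc 1 k := by simp
      have hprod : ∀ ω, ∏ i ∈ Finset.Icc 1 (k+1),
          Real.exp (lam * ξ i ω - lam^2 * (ξ i ω)^2 / 2)
          = (∏ i ∈ Finset.Icc 1 k, Real.exp (lam * ξ i ω - lam^2 * (ξ i ω)^2 / 2)) *
            Real.exp (lam * ξ (k+1) ω - lam^2 * (ξ (k+1) ω)^2 / 2) := by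
        intro ω
        rw [hins, Finset.prod_insert hnm, mul_comm]
      simp_rw [hprod]
      set Z : Ω → ℝ := fun ω => ∏ i ∈ Finset.Icc 1 k,
        Real.exp (lam * ξ i ω - lam^2 * (ξ i ω)^2 / 2) with hZ
      have hZm : StronglyMeasurable[𝔉 k] Z := by
        have : Z = ∏ i ∈ Finset.Icc 1 k,
            (fun ω => Real.exp (lam * ξ i ω - lam^2 * (ξ i ω)^2 / 2)) := by
          funext ω
          rw [Finset.prod_apply]
        rw [this]
        apply Finset.stronglyMeasurable_prod
        intro i hi
        have hik : 𝔉 i ≤ 𝔉 k := hmono (Finset.mem_Icc.mp hi).2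
        have h1 : StronglyMeasurable[𝔉 k] (ξ i) := (hadp i).mono hik
        exact (((h1.measurable.const_mul lam).sub
          (((h1.measurable.pow_const 2).const_mul (lam^2)).div_const 2)).exp).stronglyMeasurable
      have hZ0 : ∀ ω, 0 ≤ Z ω := fun ω =>
        Finset.prod_nonneg fun i _ => (Real.exp_pos _).le
      have hZC : ∀ ω, Z ω ≤ Real.exp 2⁻¹ ^ k := by
        intro ω
        calc Z ω ≤ ∏ _i ∈ Finset.Icc 1 k, Real.exp 2⁻¹ :=
              Finset.prod_le_prod (fun i _ => (Real.exp_pos _).le)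
                (fun i _ => exp_term_le lam (ξ i ω))
          _ = Real.exp 2⁻¹ ^ k := by
              rw [Finset.prod_const, Nat.card_Icc]; norm_num
      have hstep := stepB (μ := μ) (hle k)
        (((hadp (k+1)).mono (hle (k+1))).measurable)
        (by
          have := hheavy (k+1) (by omega)
          simpa using this)
        hlam hZm hZ0 (by positivity) hZC
      exact hstep.trans ih

lemma markov_slice {Ω : Type*} {m : MeasurableSpace Ω} {μ : Measure Ω} [IsProbabilityMeasure μ]
    {W : Ω → ℝ} (hWm : Measurable W) (hW0 : ∀ ω, 0 ≤ W ω)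
    (hint1 : ∫ ω, W ω ∂μ ≤ 1) {C1 : ℝ} (hWC : ∀ ω, W ω ≤ C1) (c : ℝ) :
    μ {ω | Real.exp c ≤ W ω} ≤ ENNReal.ofReal (Real.exp (-c)) := by
  have hWint : Integrable W μ := by
    refine (integrable_const C1).mono' hWm.aestronglyMeasurable (ae_of_all _ fun ω => ?_)
    rw [Real.norm_eq_abs, abs_of_nonneg (hW0 ω)]; exact hWC ω
  set B := {ω | Real.exp c ≤ W ω} with hBdef
  have hB : MeasurableSet B := measurableSet_le measurable_const hWm
  have h1 : (μ B).toReal * Real.exp c ≤ ∫ ω in B, W ω ∂μ := by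
    have e1 : ∫ _ω in B, Real.exp c ∂μ = (μ B).toReal * Real.exp c := by
      rw [setIntegral_const, smul_eq_mul, measureReal_def]
    rw [← e1]
    exact setIntegral_mono_on ((integrable_const _).integrableOn) hWint.integrableOn hB
      (fun ω hω => hω)
  have h2 : ∫ ω in B, W ω ∂μ ≤ ∫ ω, W ω ∂μ :=
    setIntegral_le_integral hWint (ae_of_all _ hW0)
  have h3 : (μ B).toReal ≤ Real.exp (-c) := by
    have hc := Real.exp_pos c
    have h4 : (μ B).toReal * Real.exp c ≤ 1 := le_trans h1 (le_trans h2 hint1)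
    rw [Real.exp_neg]
    have h5 : (Real.exp c)⁻¹ * Real.exp c = 1 := inv_mul_cancel₀ (ne_of_gt hc)
    nlinarith
  calc μ B = ENNReal.ofReal ((μ B).toReal) := (ENNReal.ofReal_toReal (measure_ne_top μ B)).symm
    _ ≤ ENNReal.ofReal (Real.exp (-c)) := ENNReal.ofReal_le_ofReal h3

set_option maxHeartbeats 1000000 in
theorem stmt_12 {Ω : Type*} {m : MeasurableSpace Ω} {μ : Measure Ω} [IsProbabilityMeasure μ]
    (𝔉 : ℕ → MeasurableSpace Ω) (hle : ∀ i, 𝔉 i ≤ m) (hmono : Monotone 𝔉)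
    (ξ : ℕ → Ω → ℝ)
    (hadp : ∀ i, StronglyMeasurable[𝔉 i] (ξ i))
    (hsq : ∀ i, Integrable (fun ω => (ξ i ω) ^ 2) μ)
    (hmart : ∀ i : ℕ, 1 ≤ i → μ[ξ i | 𝔉 (i - 1)] =ᵐ[μ] 0)
    (hheavy : ∀ i : ℕ, 1 ≤ i → ∀ a : ℝ, 0 < a →
      (μ[fun ω => min |ξ i ω| a * Real.sign (ξ i ω) | 𝔉 (i - 1)]) ≤ᵐ[μ] (fun _ => (0 : ℝ)))
    (n : ℕ) (x b M : ℝ) (hx : 0 < x) (hb : 0 < b) (hM : 1 ≤ M)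
    (S Q : Ω → ℝ)
    (hS : S = fun ω => ∑ i ∈ Finset.Icc 1 n, ξ i ω)
    (hQ : Q = fun ω => ∑ i ∈ Finset.Icc 1 n, (ξ i ω) ^ 2) :
    (μ {ω | x * Real.sqrt (Q ω) ≤ S ω ∧ b ≤ Real.sqrt (Q ω) ∧ Real.sqrt (Q ω) ≤ b * M}).toReal ≤
      Real.sqrt (Real.exp 1) * (1 + 2 * (1 + x) * Real.log M) * Real.exp (-x ^ 2 / 2) := by
  -- geometric parameters
  obtain ⟨δ, hδdef⟩ : ∃ δ : ℝ, δ = 1 + 1/x := ⟨_, rfl⟩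
  have hx1 : 0 < 1/x := one_div_pos.mpr hx
  have hδ1 : 1 < δ := by rw [hδdef]; linarith
  have hδ0 : 0 < δ := lt_trans one_pos hδ1
  obtain ⟨K, hKdef⟩ : ∃ K : ℕ, K = ⌊(1 + x) * Real.log M⌋₊ + 1 := ⟨_, rfl⟩
  have hlogM : 0 ≤ Real.log M := Real.log_nonneg hM
  have hKge : (1 + x) * Real.log M < K := by
    rw [hKdef]; push_cast; exact Nat.lt_floor_add_one _
  have hKle : (K:ℝ) ≤ 1 + (1+x) * Real.log M := by
    rw [hKdef]; push_cast
    have := Nat.floor_le (by positivity : (0:ℝ) ≤ (1+x) * Real.log M)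
    linarith
  have hK1 : 1 ≤ K := by omega
  have hlogδ : 1/(1+x) ≤ Real.log δ := by
    have h2 : Real.log δ⁻¹ ≤ δ⁻¹ - 1 := Real.log_le_sub_one_of_pos (by positivity)
    rw [Real.log_inv] at h2
    have hinv : δ⁻¹ = x / (x+1) := by rw [hδdef]; field_simp
    rw [hinv] at h2
    have h3 : 1 - x/(x+1) = 1/(1+x) := by field_simp; ring
    linarith
  have hδK : M ≤ δ ^ K := by
    have h1 : Real.log M ≤ K * Real.log δ := by
      have h2 : ((1+x) * Real.log M) * (1/(1+x)) ≤ (K:ℝ) * Real.log δ :=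
        mul_le_mul hKge.le hlogδ (by positivity) (by positivity)
      calc Real.log M = ((1+x) * Real.log M) * (1/(1+x)) := by field_simp
        _ ≤ (K:ℝ) * Real.log δ := h2
    calc M = Real.exp (Real.log M) := (Real.exp_log (by linarith : (0:ℝ) < M)).symm
      _ ≤ Real.exp (K * Real.log δ) := Real.exp_le_exp.2 h1
      _ = δ ^ K := by rw [← Real.log_pow, Real.exp_log (pow_pos hδ0 K)]
  -- measurability
  have hξm : ∀ i, Measurable (ξ i) := fun i => ((hadp i).mono (hle i)).measurable
  have hSm : Measurable S := by
    rw [hS]; exact Finset.measurable_sum _ (fun i _ => hξm i)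
  have hQm : Measurable Q := by
    rw [hQ]; exact Finset.measurable_sum _ (fun i _ => (hξm i).pow_const 2)
  have hQ0 : ∀ ω, 0 ≤ Q ω := by
    intro ω; rw [hQ]; exact Finset.sum_nonneg fun i _ => sq_nonneg _
  -- slices
  obtain ⟨c0, hc0⟩ : ∃ c0 : ℝ, c0 = x^2/δ - x^2/(2*δ^2) := ⟨_, rfl⟩
  obtain ⟨lam, hlamdef⟩ : ∃ lam : ℕ → ℝ, lam = fun k => x / (b * δ^(k+1)) := ⟨_, rfl⟩
  have hlampos : ∀ k, 0 < lam k := by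
    intro k; rw [hlamdef]; exact div_pos hx (by positivity)
  obtain ⟨B, hBdef⟩ : ∃ B : ℕ → Set Ω, B = fun k =>
    {ω | Real.exp c0 ≤ Real.exp (lam k * S ω - (lam k)^2 * Q ω / 2)} := ⟨_, rfl⟩
  -- covering
  have hcover : {ω | x * Real.sqrt (Q ω) ≤ S ω ∧ b ≤ Real.sqrt (Q ω) ∧ Real.sqrt (Q ω) ≤ b * M}
      ⊆ ⋃ k ∈ Finset.range K, B k := by
    intro ω hω
    obtain ⟨h1, h2, h3⟩ := hω
    obtain ⟨q, hq⟩ : ∃ q : ℝ, q = Real.sqrt (Q ω) := ⟨_, rfl⟩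
    rw [← hq] at h1 h2 h3
    have hq0 : 0 < q := lt_of_lt_of_le hb h2
    have hqQ : q^2 = Q ω := by rw [hq]; exact Real.sq_sqrt (hQ0 ω)
    obtain ⟨t, ht⟩ : ∃ t : ℝ, t = q / b := ⟨_, rfl⟩
    have ht1 : 1 ≤ t := by rw [ht]; exact (one_le_div hb).mpr h2
    have htM : t ≤ M := by rw [ht, div_le_iff₀ hb]; linarith
    obtain ⟨u, hu⟩ : ∃ u : ℝ, u = Real.logb δ t := ⟨_, rfl⟩
    have hu0 : 0 ≤ u := by rw [hu]; exact Real.logb_nonneg hδ1 ht1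
    obtain ⟨k1, hk1⟩ : ∃ k1 : ℕ, k1 = ⌊u⌋₊ := ⟨_, rfl⟩
    obtain ⟨k0, hk0⟩ : ∃ k0 : ℕ, k0 = min k1 (K-1) := ⟨_, rfl⟩
    have hk0K : k0 < K := by omega
    have hbt : b * t = q := by rw [ht]; field_simp
    have hlow : b * δ^k0 ≤ q := by
      have e1 : (δ:ℝ)^(k0:ℕ) ≤ δ^(k1:ℕ) := pow_le_pow_right₀ hδ1.le (by omega)
      have e2 : (δ:ℝ)^(k1:ℕ) ≤ t := by
        have hfl : ((k1:ℝ)) ≤ u := by rw [hk1]; exact Nat.floor_le hu0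
        calc (δ:ℝ)^(k1:ℕ) = δ ^ ((k1:ℕ):ℝ) := (Real.rpow_natCast δ k1).symm
          _ ≤ δ ^ u := (Real.rpow_le_rpow_left_iff hδ1).mpr hfl
          _ = t := by rw [hu]; exact Real.rpow_logb hδ0 (ne_of_gt hδ1) (by linarith : (0:ℝ) < t)
      calc b * δ^k0 ≤ b * t := by nlinarith [e1.trans e2]
        _ = q := hbt
    have hup : q ≤ b * δ^(k0+1) := by
      rcases le_or_gt k1 (K-1) with hc | hc
      · have hk0e : k0 = k1 := by omega
        have e2 : t ≤ δ^(k1+1) := by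
          have hfl : u < (k1:ℝ) + 1 := by rw [hk1]; exact Nat.lt_floor_add_one u
          calc t = δ ^ u := by rw [hu]; exact (Real.rpow_logb hδ0 (ne_of_gt hδ1) (by linarith)).symm
            _ ≤ δ ^ (((k1+1:ℕ)):ℝ) := by
                apply (Real.rpow_le_rpow_left_iff hδ1).mpr; push_cast; linarith
            _ = δ^(k1+1) := Real.rpow_natCast _ _
        rw [hk0e]
        calc q = b * t := hbt.symm
          _ ≤ b * δ^(k1+1) := by nlinarith
      · have hk0e : k0 + 1 = K := by omega
        rw [hk0e]
        calc q = b * t := hbt.symm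
          _ ≤ b * M := by nlinarith
          _ ≤ b * δ^K := by nlinarith
    refine Set.mem_biUnion (Finset.mem_range.mpr hk0K) ?_
    rw [hBdef]
    show Real.exp c0 ≤ Real.exp (lam k0 * S ω - (lam k0)^2 * Q ω / 2)
    apply Real.exp_le_exp.2
    obtain ⟨r, hr⟩ : ∃ r : ℝ, r = b * δ^k0 := ⟨_, rfl⟩
    rw [← hr] at hlow
    have hr0 : 0 < r := by rw [hr]; positivity
    have hlamr : lam k0 * (r * δ) = x := by
      rw [hlamdef, hr]
      show x / (b * δ^(k0+1)) * (b * δ^k0 * δ) = x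
      rw [pow_succ]
      field_simp
    have hlam0 := hlampos k0
    have hqrδ : q ≤ r * δ := by
      rw [hr]
      calc q ≤ b * δ^(k0+1) := hup
        _ = b * δ^k0 * δ := by rw [pow_succ]; ring
    have hxq : x * q ≤ S ω := h1
    have hc0e : c0 = (lam k0)^2 * r^2 * δ - (lam k0)^2 * r^2/2 := by
      rw [hc0, ← hlamr]
      field_simp
    have hkey : (lam k0)^2 * r^2 * δ - (lam k0)^2 * r^2/2 ≤
        lam k0 * (x * q) - (lam k0)^2 * q^2/2 := by
      have hx_eq : x = lam k0 * (r * δ) := hlamr.symm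
      rw [hx_eq]
      nlinarith [mul_nonneg (sq_nonneg (lam k0))
        (mul_nonneg (by linarith : (0:ℝ) ≤ q - r) (by nlinarith : (0:ℝ) ≤ 2*(r*δ) - q - r))]
    have hS' : lam k0 * (x * q) ≤ lam k0 * S ω :=
      mul_le_mul_of_nonneg_left hxq hlam0.le
    have hQq : Q ω = q^2 := hqQ.symm
    rw [hQq, hc0e]
    linarith
  -- per-slice bound
  have hpt : ∀ (k : ℕ) ω, Real.exp (lam k * S ω - (lam k)^2 * Q ω / 2) =
      ∏ i ∈ Finset.Icc 1 n, Real.exp (lam k * ξ i ω - (lam k)^2 * (ξ i ω)^2 / 2) := by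
    intro k ω
    rw [hS, hQ, ← Real.exp_sum]
    congr 1
    rw [Finset.mul_sum, Finset.mul_sum, Finset.sum_div, ← Finset.sum_sub_distrib]
  have hWle : ∀ k : ℕ, ∫ ω, Real.exp (lam k * S ω - (lam k)^2 * Q ω / 2) ∂μ ≤ 1 := by
    intro k
    calc ∫ ω, Real.exp (lam k * S ω - (lam k)^2 * Q ω / 2) ∂μ
        = ∫ ω, ∏ i ∈ Finset.Icc 1 n,
            Real.exp (lam k * ξ i ω - (lam k)^2 * (ξ i ω)^2 / 2) ∂μ := by
          congr 1; funext ω; exact hpt k ω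
      _ ≤ 1 := superm 𝔉 hle hmono ξ hadp hheavy (hlampos k) n
  have hμB : ∀ k : ℕ, μ (B k) ≤ ENNReal.ofReal (Real.exp (-c0)) := by
    intro k
    rw [hBdef]
    refine markov_slice (W := fun ω => Real.exp (lam k * S ω - (lam k)^2 * Q ω / 2))
      ?_ (fun ω => (Real.exp_pos _).le) (hWle k) (C1 := Real.exp 2⁻¹ ^ n) ?_ c0
    · exact ((hSm.const_mul (lam k)).sub ((hQm.const_mul ((lam k)^2)).div_const 2)).exp
    · intro ω
      show Real.exp (lam k * S ω - (lam k)^2 * Q ω / 2) ≤ Real.exp 2⁻¹ ^ n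
      rw [hpt k ω]
      calc ∏ i ∈ Finset.Icc 1 n, Real.exp (lam k * ξ i ω - (lam k)^2 * (ξ i ω)^2 / 2)
          ≤ ∏ _i ∈ Finset.Icc 1 n, Real.exp 2⁻¹ :=
            Finset.prod_le_prod (fun i _ => (Real.exp_pos _).le)
              (fun i _ => exp_term_le (lam k) (ξ i ω))
        _ = Real.exp 2⁻¹ ^ n := by rw [Finset.prod_const, Nat.card_Icc]; norm_num
  -- summing up
  have hμE : μ {ω | x * Real.sqrt (Q ω) ≤ S ω ∧ b ≤ Real.sqrt (Q ω) ∧ Real.sqrt (Q ω) ≤ b * M}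
      ≤ (K : ENNReal) * ENNReal.ofReal (Real.exp (-c0)) := by
    calc μ {ω | x * Real.sqrt (Q ω) ≤ S ω ∧ b ≤ Real.sqrt (Q ω) ∧ Real.sqrt (Q ω) ≤ b * M}
        ≤ μ (⋃ k ∈ Finset.range K, B k) := measure_mono hcover
      _ ≤ ∑ k ∈ Finset.range K, μ (B k) := measure_biUnion_finset_le _ _
      _ ≤ ∑ _k ∈ Finset.range K, ENNReal.ofReal (Real.exp (-c0)) :=
          Finset.sum_le_sum fun k _ => hμB k
      _ = (K : ENNReal) * ENNReal.ofReal (Real.exp (-c0)) := by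
          rw [Finset.sum_const, Finset.card_range, nsmul_eq_mul]
  have htR : (μ {ω | x * Real.sqrt (Q ω) ≤ S ω ∧ b ≤ Real.sqrt (Q ω) ∧ Real.sqrt (Q ω) ≤ b * M}).toReal
      ≤ (K:ℝ) * Real.exp (-c0) := by
    have h1 := ENNReal.toReal_mono
      (by exact ENNReal.mul_ne_top (ENNReal.natCast_ne_top K) ENNReal.ofReal_ne_top) hμE
    rwa [ENNReal.toReal_mul, ENNReal.toReal_natCast,
      ENNReal.toReal_ofReal (Real.exp_pos _).le] at h1
  -- numeric conclusion
  have hs0 : 0 < x/(x+1) := by positivity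
  have hs1 : x/(x+1) < 1 := by rw [div_lt_one (by linarith)]; linarith
  have hc0' : c0 = x^2*(x/(x+1)) - x^2*(x/(x+1))^2/2 := by
    rw [hc0, hδdef]; field_simp
  have he : x - x*(x/(x+1)) = x/(x+1) := by field_simp; ring
  have hgap : x^2/2 - c0 = (x/(x+1))^2/2 := by
    calc x^2/2 - c0 = (x - x*(x/(x+1)))^2/2 := by rw [hc0']; ring
      _ = (x/(x+1))^2/2 := by rw [he]
  have hcle : Real.exp (-c0) ≤ Real.exp 2⁻¹ * Real.exp (-x ^ 2 / 2) := by
    rw [← Real.exp_add]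
    apply Real.exp_le_exp.2
    nlinarith [hgap, hs1, hs0]
  have hsqrt : Real.sqrt (Real.exp 1) = Real.exp 2⁻¹ := by
    rw [Real.sqrt_eq_rpow, Real.exp_one_rpow]
    norm_num
  have hKb : (K:ℝ) ≤ 1 + 2*(1+x) * Real.log M := by
    have : (1+x) * Real.log M ≤ 2*(1+x)*Real.log M := by nlinarith
    linarith
  calc (μ {ω | x * Real.sqrt (Q ω) ≤ S ω ∧ b ≤ Real.sqrt (Q ω) ∧ Real.sqrt (Q ω) ≤ b * M}).toReal
      ≤ (K:ℝ) * Real.exp (-c0) := htR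
    _ ≤ (1 + 2*(1+x) * Real.log M) * (Real.exp 2⁻¹ * Real.exp (-x ^ 2 / 2)) := by
        apply mul_le_mul hKb hcle (Real.exp_pos _).le (by positivity)
    _ = Real.sqrt (Real.exp 1) * (1 + 2 * (1 + x) * Real.log M) * Real.exp (-x ^ 2 / 2) := by
        rw [hsqrt]; ring
end

section
/- Let (ξ_i, 𝔉_i) be martingale differences with E|ξ_i|^β < ∞ for some β ∈ (1,2), S_n = Σ ξ_i, and G_n(β) = Σ (ξ_i⁺)^β + Σ E[(ξ_i⁻)^β | 𝔉_{i-1}]. Then for every λ > 0 the process V_k(λ) = exp{λ S_k - λ^β G_k(β)} is a supermartingale with E[V_n(λ)] ≤ 1. -/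
open MeasureTheory Real Finset

lemma fgl_key1 {β t : ℝ} (hβ1 : 1 < β) (hβ2 : β ≤ 2) (ht : 0 ≤ t) :
    Real.exp (t - t ^ β) ≤ 1 + t := by
  rcases eq_or_lt_of_le ht with h | ht0
  · simp [← h, Real.zero_rpow (by positivity : β ≠ 0)]
  rcases le_total t 1 with h1 | h1
  · have h2 : t ^ (2:ℝ) ≤ t ^ β := Real.rpow_le_rpow_of_exponent_ge ht0 h1 hβ2
    have h3 : Real.exp (t - t ^ β) ≤ Real.exp (t - t ^ (2:ℝ)) := by
      apply Real.exp_le_exp.2; linarith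
    refine h3.trans ?_
    have h4 : t ^ (2:ℝ) = t ^ 2 := by
      rw [Real.rpow_two]
    rw [h4]
    have h5 : t ^ 2 - t + 1 ≤ Real.exp (t ^ 2 - t) := by
      have := Real.add_one_le_exp (t ^ 2 - t); linarith
    have h6 : 0 < Real.exp (t ^ 2 - t) := Real.exp_pos _
    rw [show t - t^2 = -(t^2 - t) by ring, Real.exp_neg]
    rw [inv_le_iff_one_le_mul₀ h6]  -- check name
    nlinarith [Real.exp_pos (t^2 - t)]
  · have h2 : t ^ (1:ℝ) ≤ t ^ β := Real.rpow_le_rpow_of_exponent_le h1 hβ1.le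
    rw [Real.rpow_one] at h2
    have : Real.exp (t - t ^ β) ≤ 1 := by
      rw [Real.exp_le_one_iff]; linarith
    linarith

lemma fgl_key2 {β t : ℝ} (hβ1 : 1 < β) (hβ2 : β ≤ 2) (ht : 0 ≤ t) :
    Real.exp (-t) ≤ 1 - t + t ^ β := by
  rcases eq_or_lt_of_le ht with h | ht0
  · simp [← h, Real.zero_rpow (by positivity : β ≠ 0)]
  rcases le_total t 1 with h1 | h1
  · have h2 : t ^ (2:ℝ) ≤ t ^ β := Real.rpow_le_rpow_of_exponent_ge ht0 h1 hβ2
    rw [Real.rpow_two] at h2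
    have h5 : Real.exp (-t) ≤ 1 / (1 + t) := by
      rw [div_eq_inv_mul, mul_one, Real.exp_neg]
      apply inv_anti₀ (by linarith)
      have := Real.add_one_le_exp t; linarith
    refine h5.trans ?_
    rw [div_le_iff₀ (by linarith : (0:ℝ) < 1 + t)]
    nlinarith
  · have h2 : t ^ (1:ℝ) ≤ t ^ β := Real.rpow_le_rpow_of_exponent_le h1 hβ1.le
    rw [Real.rpow_one] at h2
    have : Real.exp (-t) ≤ 1 := by rw [Real.exp_le_one_iff]; linarith
    linarith

lemma fgl_main {β y : ℝ} (hβ1 : 1 < β) (hβ2 : β ≤ 2) :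
    Real.exp (y - (max y 0) ^ β) ≤ 1 + y + (max (-y) 0) ^ β := by
  rcases le_total 0 y with hy | hy
  · rw [max_eq_left hy, max_eq_right (by linarith), Real.zero_rpow (by positivity : β ≠ 0)]
    have := fgl_key1 (t := y) hβ1 hβ2 hy
    linarith
  · rw [max_eq_right hy, max_eq_left (by linarith), Real.zero_rpow (by positivity : β ≠ 0)]
    have := fgl_key2 (t := -y) hβ1 hβ2 (by linarith)
    rw [neg_neg] at this
    rw [sub_zero]
    linarith

lemma fgl_bound {β y : ℝ} (hβ1 : 1 < β) : y - (max y 0) ^ β ≤ 1 := by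
  rcases le_total 0 y with hy | hy
  · rw [max_eq_left hy]
    rcases le_total y 1 with h1 | h1
    · have : (0:ℝ) ≤ y ^ β := Real.rpow_nonneg hy β
      linarith
    · have h2 : y ^ (1:ℝ) ≤ y ^ β := Real.rpow_le_rpow_of_exponent_le h1 hβ1.le
      rw [Real.rpow_one] at h2; linarith
  · rw [max_eq_right hy, Real.zero_rpow (by positivity : β ≠ 0)]
    linarith

-- scaling: max (lam*x) 0 = lam * max x 0 for lam ≥ 0
lemma fgl_scale {lam x : ℝ} (h : 0 ≤ lam) : max (lam * x) 0 = lam * max x 0 := by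
  rcases le_total x 0 with hx | hx
  · rw [max_eq_right hx, mul_zero, max_eq_right (mul_nonpos_of_nonneg_of_nonpos h hx)]
  · rw [max_eq_left hx, max_eq_left (mul_nonneg h hx)]

lemma fgl_scale_rpow {lam x β : ℝ} (h : 0 ≤ lam) :
    (max (lam * x) 0) ^ β = lam ^ β * (max x 0) ^ β := by
  rw [fgl_scale h, Real.mul_rpow h (le_max_right _ _)]

theorem stmt_13 {Ω : Type*} {m : MeasurableSpace Ω} {μ : Measure Ω} [IsProbabilityMeasure μ]
    (ℱ : Filtration ℕ m)
    (ξ : ℕ → Ω → ℝ)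
    (hadp : ∀ i, StronglyMeasurable[ℱ i] (ξ i))
    (β : ℝ) (hβ1 : 1 < β) (hβ2 : β < 2)
    (hmom : ∀ i, Integrable (fun ω => |ξ i ω| ^ β) μ)
    (hmart : ∀ i : ℕ, 1 ≤ i → μ[ξ i | ℱ (i - 1)] =ᵐ[μ] 0)
    (n : ℕ) (lam : ℝ) (hlam : 0 < lam)
    (S G : ℕ → Ω → ℝ)
    (hS : S = fun k ω => ∑ i ∈ Finset.Icc 1 k, ξ i ω)
    (hG : G = fun k ω =>
      (∑ i ∈ Finset.Icc 1 k, (max (ξ i ω) 0) ^ β)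
        + ∑ i ∈ Finset.Icc 1 k, (μ[fun ω' => (max (-(ξ i ω')) 0) ^ β | ℱ (i - 1)]) ω)
    (V : ℕ → Ω → ℝ)
    (hV : V = fun k ω => Real.exp (lam * S k ω - lam ^ β * G k ω)) :
    Supermartingale V ℱ μ ∧ ∫ ω, V n ω ∂μ ≤ 1 := by
  have hβ0 : (0:ℝ) < β := by linarith
  -- basic measurability
  have hξm : ∀ i, StronglyMeasurable (ξ i) := fun i => (hadp i).mono (ℱ.le i)
  have hnegm : ∀ i, StronglyMeasurable[ℱ i] (fun ω => (max (-(ξ i ω)) 0) ^ β) := by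
    intro i
    exact (((hadp i).measurable.neg.max measurable_const).pow_const β).stronglyMeasurable
  -- integrability of ξ
  have hξint : ∀ i, Integrable (ξ i) μ := by
    intro i
    refine ((integrable_const (1:ℝ)).add (hmom i)).mono' (hξm i).aestronglyMeasurable ?_
    refine Filter.Eventually.of_forall fun ω => ?_
    rw [Real.norm_eq_abs, Pi.add_apply]
    rcases le_total (|ξ i ω|) 1 with h | h
    · have : (0:ℝ) ≤ |ξ i ω| ^ β := Real.rpow_nonneg (abs_nonneg _) β
      linarith
    · have h2 : |ξ i ω| ^ (1:ℝ) ≤ |ξ i ω| ^ β := Real.rpow_le_rpow_of_exponent_le h hβ1.le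
      rw [Real.rpow_one] at h2
      linarith
  -- integrability of (ξ⁻)^β and (ξ⁺)^β
  have hnegint : ∀ i, Integrable (fun ω => (max (-(ξ i ω)) 0) ^ β) μ := by
    intro i
    refine (hmom i).mono' ((hnegm i).mono (ℱ.le i)).aestronglyMeasurable ?_
    refine Filter.Eventually.of_forall fun ω => ?_
    rw [Real.norm_eq_abs, abs_of_nonneg (Real.rpow_nonneg (le_max_right _ _) β)]
    exact Real.rpow_le_rpow (le_max_right _ _) (by rcases le_total (ξ i ω) 0 with h|h <;>
      simp [abs_of_nonpos, abs_of_nonneg, h] <;> linarith [abs_nonneg (ξ i ω), neg_abs_le (ξ i ω), le_abs_self (ξ i ω)]) hβ0.le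
  -- adaptedness of V
  have hVadp : ∀ k, StronglyMeasurable[ℱ k] (V k) := by
    intro k
    rw [hV, hS, hG]
    apply Measurable.stronglyMeasurable
    apply Measurable.exp
    apply Measurable.sub
    · apply Measurable.const_mul
      apply Finset.measurable_sum
      intro i hi
      exact ((hadp i).mono (ℱ.mono (Finset.mem_Icc.mp hi).2)).measurable
    · apply Measurable.const_mul
      apply Measurable.add
      · apply Finset.measurable_sum
        intro i hi
        have m1 : Measurable[ℱ k] (ξ i) := ((hadp i).mono (ℱ.mono (Finset.mem_Icc.mp hi).2)).measurable
        exact (m1.max measurable_const).pow_const β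
      · apply Finset.measurable_sum
        intro i hi
        have h1 : i - 1 ≤ k := le_trans (Nat.sub_le i 1) (Finset.mem_Icc.mp hi).2
        exact (stronglyMeasurable_condExp.mono (ℱ.mono h1)).measurable
  -- a.e. nonnegativity of the condexp terms
  have hAnn : ∀ i, 0 ≤ᵐ[μ] μ[fun ω' => (max (-(ξ i ω')) 0) ^ β | ℱ (i-1)] := by
    intro i
    exact condExp_nonneg (Filter.Eventually.of_forall fun ω =>
      Real.rpow_nonneg (le_max_right _ _) β)
  -- a.e. bound on V
  have hVbd : ∀ k, ∀ᵐ ω ∂μ, V k ω ≤ Real.exp k := by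
    intro k
    have hae : ∀ᵐ ω ∂μ, ∀ i ∈ Finset.Icc 1 k,
        0 ≤ (μ[fun ω' => (max (-(ξ i ω')) 0) ^ β | ℱ (i-1)]) ω := by
      rw [ae_all_iff]
      intro i
      filter_upwards [hAnn i] with ω hω _
      exact hω
    filter_upwards [hae] with ω hω
    rw [hV, hS, hG]
    simp only []
    rw [Real.exp_le_exp]
    have h1 : lam * ∑ i ∈ Finset.Icc 1 k, ξ i ω
        - lam ^ β * ∑ i ∈ Finset.Icc 1 k, (max (ξ i ω) 0) ^ β
        = ∑ i ∈ Finset.Icc 1 k, (lam * ξ i ω - (max (lam * ξ i ω) 0) ^ β) := by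
      rw [Finset.mul_sum, Finset.mul_sum, ← Finset.sum_sub_distrib]
      refine Finset.sum_congr rfl fun i hi => ?_
      rw [fgl_scale_rpow hlam.le]
    have h2 : ∑ i ∈ Finset.Icc 1 k, (lam * ξ i ω - (max (lam * ξ i ω) 0) ^ β)
        ≤ ∑ i ∈ Finset.Icc 1 k, (1:ℝ) := by
      refine Finset.sum_le_sum fun i hi => fgl_bound hβ1
    have h3 : (0:ℝ) ≤ lam ^ β * ∑ i ∈ Finset.Icc 1 k,
        (μ[fun ω' => (max (-(ξ i ω')) 0) ^ β | ℱ (i-1)]) ω := by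
      refine mul_nonneg (Real.rpow_nonneg hlam.le β) (Finset.sum_nonneg hω)
    have h4 : ∑ i ∈ Finset.Icc 1 k, (1:ℝ) = k := by simp
    nlinarith [h1, h2]
  have hVnn : ∀ k ω, 0 ≤ V k ω := by
    intro k ω; rw [hV]; exact (Real.exp_pos _).le
  have hVint : ∀ k, Integrable (V k) μ := by
    intro k
    refine (integrable_const (Real.exp k)).mono'
      (((hVadp k).mono (ℱ.le k)).aestronglyMeasurable) ?_
    filter_upwards [hVbd k] with ω hω
    rw [Real.norm_eq_abs, abs_of_nonneg (hVnn k ω)]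
    exact hω
  -- the one-step supermartingale property
  have step : ∀ k, μ[V (k+1) | ℱ k] ≤ᵐ[μ] V k := by
    intro k
    set Nf : Ω → ℝ := fun ω => (max (-(ξ (k+1) ω)) 0) ^ β with hNf
    set A : Ω → ℝ := μ[Nf | ℱ k] with hA
    set W : Ω → ℝ := fun ω => V k ω * Real.exp (-(lam ^ β * A ω)) with hW
    set Y : Ω → ℝ := fun ω =>
      Real.exp (lam * ξ (k+1) ω - (max (lam * ξ (k+1) ω) 0) ^ β) with hY
    have hksub : k + 1 - 1 = k := by omega
    have hfun : V (k+1) = W * Y := by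
      funext ω
      rw [hV, hS, hG]
      simp only [Pi.mul_apply, hW, hY, hA, hNf, hksub]
      rw [Finset.sum_Icc_succ_top (Nat.le_add_left 1 k),
          Finset.sum_Icc_succ_top (Nat.le_add_left 1 k),
          Finset.sum_Icc_succ_top (Nat.le_add_left 1 k), hksub]
      rw [hV, hS, hG]
      simp only []
      rw [← Real.exp_add, ← Real.exp_add, Real.exp_eq_exp]
      rw [fgl_scale_rpow hlam.le]
      ring
    have hWsm : StronglyMeasurable[ℱ k] W := by
      apply Measurable.stronglyMeasurable
      exact ((hVadp k).measurable.mul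
        ((stronglyMeasurable_condExp.measurable.const_mul (lam ^ β)).neg.exp))
    have hYbd : ∀ ω, Y ω ≤ Real.exp 1 := by
      intro ω
      rw [hY]
      exact Real.exp_le_exp.2 (fgl_bound hβ1)
    have hYnn : ∀ ω, 0 ≤ Y ω := fun ω => (Real.exp_pos _).le
    have hYint : Integrable Y μ := by
      refine (integrable_const (Real.exp 1)).mono' ?_ ?_
      · apply Measurable.aestronglyMeasurable
        have m1 : Measurable (ξ (k+1)) := (hξm (k+1)).measurable
        exact ((m1.const_mul lam).sub
          (((m1.const_mul lam).max measurable_const).pow_const β)).exp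
      · exact Filter.Eventually.of_forall fun ω => by
          rw [Real.norm_eq_abs, abs_of_nonneg (hYnn ω)]; exact hYbd ω
    have hWYint : Integrable (W * Y) μ := hfun ▸ hVint (k+1)
    have hpull : μ[W * Y | ℱ k] =ᵐ[μ] W * μ[Y | ℱ k] :=
      condExp_mul_of_stronglyMeasurable_left hWsm hWYint hYint
    -- the comparison function
    set Z : Ω → ℝ := (fun _ => (1:ℝ)) + lam • ξ (k+1) + lam ^ β • Nf with hZ
    have hZint : Integrable Z μ :=
      (((integrable_const (1:ℝ)).add ((hξint (k+1)).smul lam)).add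
        ((hnegint (k+1)).smul (lam ^ β)))
    have hYleZ : ∀ ω, Y ω ≤ Z ω := by
      intro ω
      have h := fgl_main (y := lam * ξ (k+1) ω) hβ1 hβ2.le
      rw [show -(lam * ξ (k+1) ω) = lam * (-(ξ (k+1) ω)) by ring,
        fgl_scale_rpow (x := -(ξ (k+1) ω)) hlam.le] at h
      simpa [hY, hZ, hNf, Pi.add_apply] using h
    have hmono : μ[Y | ℱ k] ≤ᵐ[μ] μ[Z | ℱ k] :=
      condExp_mono hYint hZint (Filter.Eventually.of_forall hYleZ)
    have hZcond : μ[Z | ℱ k] =ᵐ[μ] fun ω => 1 + lam ^ β * A ω := by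
      have e1 : μ[Z | ℱ k] =ᵐ[μ]
          μ[(fun _ => (1:ℝ)) + lam • ξ (k+1) | ℱ k] + μ[lam ^ β • Nf | ℱ k] :=
        condExp_add ((integrable_const (1:ℝ)).add ((hξint (k+1)).smul lam))
          ((hnegint (k+1)).smul (lam ^ β)) _
      have e2 : μ[(fun _ => (1:ℝ)) + lam • ξ (k+1) | ℱ k] =ᵐ[μ]
          μ[(fun _ => (1:ℝ)) | ℱ k] + μ[lam • ξ (k+1) | ℱ k] :=
        condExp_add (integrable_const (1:ℝ)) ((hξint (k+1)).smul lam) _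
      have e3 : μ[(fun _ => (1:ℝ)) | ℱ k] = fun _ => (1:ℝ) := condExp_const (ℱ.le k) 1
      have e4 : μ[lam • ξ (k+1) | ℱ k] =ᵐ[μ] lam • μ[ξ (k+1) | ℱ k] :=
        condExp_smul lam (ξ (k+1)) _
      have e5 : μ[ξ (k+1) | ℱ k] =ᵐ[μ] 0 := by
        have := hmart (k+1) (Nat.le_add_left 1 k)
        rwa [hksub] at this
      have e6 : μ[lam ^ β • Nf | ℱ k] =ᵐ[μ] (lam ^ β) • A :=
        (condExp_smul (lam ^ β) Nf _)
      filter_upwards [e1, e2, e4, e5, e6] with ω h1 h2 h4 h5 h6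
      rw [h1]
      simp only [Pi.add_apply, h2, h6, e3, h4, Pi.smul_apply, h5, Pi.zero_apply,
        smul_eq_mul, mul_zero, add_zero]
    -- put things together
    have hWnn : ∀ ω, 0 ≤ W ω := fun ω => mul_nonneg (hVnn k ω) (Real.exp_pos _).le
    rw [hfun]
    calc μ[W * Y | ℱ k] =ᵐ[μ] W * μ[Y | ℱ k] := hpull
      _ ≤ᵐ[μ] V k := by
        filter_upwards [hmono, hZcond, condExp_nonneg (μ := μ) (m := ℱ k)
          (f := Nf) (Filter.Eventually.of_forall fun ω =>
            Real.rpow_nonneg (le_max_right _ _) β)] with ω h1 h2 h3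
        have h4 : (μ[Y | ℱ k]) ω ≤ 1 + lam ^ β * A ω := by
          rw [← h2]; exact h1
        have h5 : (0:ℝ) ≤ lam ^ β * A ω :=
          mul_nonneg (Real.rpow_nonneg hlam.le β) h3
        set u := lam ^ β * A ω with hu
        have h6 : Real.exp (-u) * (1 + u) ≤ 1 := by
          have h7 : 1 + u ≤ Real.exp u := by
            have := Real.add_one_le_exp u; linarith
          calc Real.exp (-u) * (1 + u) ≤ Real.exp (-u) * Real.exp u :=
                mul_le_mul_of_nonneg_left h7 (Real.exp_pos _).le
            _ = 1 := by rw [← Real.exp_add]; simp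
        have h8 : (μ[Y | ℱ k]) ω ≤ Real.exp u := by
          have h7 : 1 + u ≤ Real.exp u := by
            have := Real.add_one_le_exp u; linarith
          linarith
        simp only [Pi.mul_apply, hW]
        calc V k ω * Real.exp (-u) * (μ[Y | ℱ k]) ω
            ≤ V k ω * Real.exp (-u) * (1 + u) := by
              apply mul_le_mul_of_nonneg_left h4
              exact mul_nonneg (hVnn k ω) (Real.exp_pos _).le
          _ = V k ω * (Real.exp (-u) * (1 + u)) := by ring
          _ ≤ V k ω * 1 := mul_le_mul_of_nonneg_left h6 (hVnn k ω)
          _ = V k ω := mul_one _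
  have hsup : Supermartingale V ℱ μ := supermartingale_nat hVadp hVint step
  refine ⟨hsup, ?_⟩
  have hV0 : V 0 = fun _ => (1:ℝ) := by
    funext ω
    rw [hV, hS, hG]
    simp
  have h0 : μ[V n | ℱ 0] ≤ᵐ[μ] V 0 := hsup.2.1 0 n (Nat.zero_le n)
  have h1 : ∫ ω, V n ω ∂μ = ∫ ω, (μ[V n | ℱ 0]) ω ∂μ :=
    (integral_condExp (ℱ.le 0)).symm
  rw [h1]
  calc ∫ ω, (μ[V n | ℱ 0]) ω ∂μ ≤ ∫ ω, V 0 ω ∂μ :=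
        integral_mono_ae integrable_condExp (hVint 0) h0
    _ = 1 := by rw [hV0]; simp
end

section
/- Let (ξ_i, 𝔉_i) be martingale differences with E|ξ_i|^β < ∞ for some β ∈ (1,2), S_n = Σ ξ_i, G_n(β) = Σ (ξ_i⁺)^β + Σ E[(ξ_i⁻)^β | 𝔉_{i-1}]. Then for all x > 0 and p > 1, P(S_n ≥ x G_n(β)) ≤ (E[exp{(p-1)(x/β)^{β/(β-1)} (1-β) G_n(β)}])^{1/p}. -/
open MeasureTheory Real Finset

/-- `exp u ≤ 1/(1-u)` for `u < 1`. -/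
lemma aux_exp_le_inv {u : ℝ} (hu : u < 1) : Real.exp u ≤ 1 / (1 - u) := by
  have h1 : 0 < 1 - u := by linarith
  have h2 : 1 - u ≤ Real.exp (-u) := by
    have := Real.add_one_le_exp (-u); linarith
  have h3 : (Real.exp (-u))⁻¹ ≤ (1 - u)⁻¹ := inv_anti₀ h1 h2
  rw [← Real.exp_neg, neg_neg] at h3
  rw [one_div]
  exact h3

/-- Key pointwise inequality: for `β ∈ (1,2)`,
`exp (t - (t⁺)^β) ≤ 1 + t + (t⁻)^β`. -/
lemma aux_key_ineq {β : ℝ} (hβ1 : 1 < β) (hβ2 : β < 2) (t : ℝ) :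
    Real.exp (t - (max t 0) ^ β) ≤ 1 + t + (max (-t) 0) ^ β := by
  have hβ0 : (0:ℝ) < β := by linarith
  rcases le_or_gt t 0 with ht | ht
  · -- t ≤ 0
    have hmax : max t 0 = 0 := max_eq_right ht
    have hmax2 : max (-t) 0 = -t := max_eq_left (by linarith)
    rw [hmax, Real.zero_rpow hβ0.ne', sub_zero, hmax2]
    rcases eq_or_lt_of_le ht with rfl | ht'
    · simpa using Real.rpow_nonneg le_rfl β
    rcases le_or_gt (-t) 1 with hs | hs
    · -- -1 ≤ t < 0 : exp t ≤ 1/(1-t) ≤ 1+t+t² ≤ 1+t+(-t)^β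
      have hsq : t ^ 2 ≤ (-t) ^ β := by
        have h1 : (-t) ^ (2:ℝ) ≤ (-t) ^ β :=
          Real.rpow_le_rpow_of_exponent_ge (by linarith) hs hβ2.le
        have h2 : (-t) ^ (2:ℝ) = t ^ 2 := by
          rw [show ((2:ℝ)) = ((2:ℕ):ℝ) by norm_num, Real.rpow_natCast]
          ring
        exact le_of_eq_of_le h2.symm h1
      have h3 : Real.exp t ≤ 1 / (1 - t) := aux_exp_le_inv (by linarith)
      have h4 : 1 / (1 - t) ≤ 1 + t + t ^ 2 := by
        rw [div_le_iff₀ (by linarith)]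
        nlinarith
      linarith
    · -- t < -1 : RHS ≥ 1 + t + (-t) ≥ 1 ≥ exp t
      have h1 : -t ≤ (-t) ^ β := by
        have := Real.rpow_le_rpow_of_exponent_le hs.le hβ1.le
        rwa [Real.rpow_one] at this
      have h2 : Real.exp t ≤ 1 := Real.exp_le_one_iff.mpr ht
      linarith
  · -- t > 0
    have hmax : max t 0 = t := max_eq_left ht.le
    have hmax2 : max (-t) 0 = 0 := max_eq_right (by linarith)
    rw [hmax, hmax2, Real.zero_rpow hβ0.ne', add_zero]
    rcases le_or_gt 1 t with ht1 | ht1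
    · -- t ≥ 1 : t - t^β ≤ 0
      have h1 : t ≤ t ^ β := by
        have := Real.rpow_le_rpow_of_exponent_le ht1 hβ1.le
        rwa [Real.rpow_one] at this
      have h2 : Real.exp (t - t ^ β) ≤ 1 := Real.exp_le_one_iff.mpr (by linarith)
      linarith
    · -- 0 < t < 1
      have hsq : t ^ 2 ≤ t ^ β := by
        have h1 : t ^ (2:ℝ) ≤ t ^ β :=
          Real.rpow_le_rpow_of_exponent_ge ht ht1.le hβ2.le
        have h2 : t ^ (2:ℝ) = t ^ 2 := by
          rw [show ((2:ℝ)) = ((2:ℕ):ℝ) by norm_num, Real.rpow_natCast]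
        exact le_of_eq_of_le h2.symm h1
      have h3 : Real.exp (t - t ^ β) ≤ Real.exp (t - t ^ 2) :=
        Real.exp_le_exp.mpr (by linarith)
      have h4 : Real.exp (t - t ^ 2) ≤ 1 / (1 - (t - t ^ 2)) :=
        aux_exp_le_inv (by nlinarith)
      have h5 : 1 / (1 - (t - t ^ 2)) ≤ 1 + t := by
        rw [div_le_iff₀ (by nlinarith)]
        nlinarith
      linarith

/-- Each increment of the exponent is at most 1. -/
lemma aux_term_le_one {β : ℝ} (hβ1 : 1 < β) (t : ℝ) : t - (max t 0) ^ β ≤ 1 := by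
  have hβ0 : (0:ℝ) < β := by linarith
  rcases le_or_gt t 0 with ht | ht
  · rw [max_eq_right ht, Real.zero_rpow hβ0.ne']; linarith
  · rw [max_eq_left ht.le]
    rcases le_or_gt t 1 with ht1 | ht1
    · have : (0:ℝ) ≤ t ^ β := Real.rpow_nonneg ht.le β
      linarith
    · have h1 : t ≤ t ^ β := by
        have := Real.rpow_le_rpow_of_exponent_le ht1.le hβ1.le
        rwa [Real.rpow_one] at this
      linarith


/-- One-step supermartingale bound. -/
lemma aux_step {Ω : Type*} {m : MeasurableSpace Ω} {μ : Measure Ω} [IsProbabilityMeasure μ]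
    {mk : MeasurableSpace Ω} (hlek : mk ≤ m)
    {β : ℝ} (hβ1 : 1 < β) (hβ2 : β < 2)
    (ξk : Ω → ℝ) (hadpk : StronglyMeasurable[m] ξk)
    (hmomk : Integrable (fun ω => |ξk ω| ^ β) μ)
    (hmartk : μ[ξk | mk] =ᵐ[μ] 0)
    (Y : Ω → ℝ) (hY : StronglyMeasurable[mk] Y) (hY0 : ∀ ω, 0 ≤ Y ω)
    (C : ℝ) (hC : 0 ≤ C) (hYb : ∀ᵐ ω ∂μ, Y ω ≤ C) :
    ∫ ω, Y ω * Real.exp (-(μ[fun ω' => (max (-(ξk ω')) 0) ^ β | mk]) ω)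
        * Real.exp (ξk ω - (max (ξk ω) 0) ^ β) ∂μ ≤ ∫ ω, Y ω ∂μ := by
  have hβ0 : (0:ℝ) < β := by linarith
  set g : Ω → ℝ := μ[fun ω' => (max (-(ξk ω')) 0) ^ β | mk] with hgdef
  have hg_meas : StronglyMeasurable[mk] g := stronglyMeasurable_condExp
  have hcontmax : Continuous (fun y : ℝ => (max y 0) ^ β) :=
    (Real.continuous_rpow_const hβ0.le).comp (continuous_id.max continuous_const)
  have hnegm : StronglyMeasurable[m] (fun ω => (max (-(ξk ω)) 0) ^ β) :=
    hcontmax.comp_stronglyMeasurable hadpk.neg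
  have hneg_int : Integrable (fun ω => (max (-(ξk ω)) 0) ^ β) μ :=
    hmomk.mono' hnegm.aestronglyMeasurable (ae_of_all _ fun ω => by
      rw [Real.norm_of_nonneg (Real.rpow_nonneg (le_max_right _ _) β)]
      exact Real.rpow_le_rpow (le_max_right _ _)
        (max_le (neg_le_abs _) (abs_nonneg _)) hβ0.le)
  have hξ_int : Integrable ξk μ :=
    (((integrable_const (1:ℝ)).add hmomk)).mono' hadpk.aestronglyMeasurable
      (ae_of_all _ fun ω => by
        have h0 : (0:ℝ) ≤ |ξk ω| ^ β := Real.rpow_nonneg (abs_nonneg _) β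
        have hkey : |ξk ω| ≤ 1 + |ξk ω| ^ β := by
          rcases le_or_gt |ξk ω| 1 with h | h
          · linarith
          · have h1 : |ξk ω| ≤ |ξk ω| ^ β := by
              have := Real.rpow_le_rpow_of_exponent_le h.le hβ1.le
              rwa [Real.rpow_one] at this
            linarith
        simpa [Real.norm_eq_abs] using hkey)
  have hg0 : 0 ≤ᵐ[μ] g :=
    condExp_nonneg (ae_of_all _ fun ω => Real.rpow_nonneg (le_max_right _ _) β)
  set Z : Ω → ℝ := fun ω => Y ω * Real.exp (-(g ω)) with hZdef
  have hZ : StronglyMeasurable[mk] Z :=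
    hY.mul ((Real.continuous_exp.comp continuous_neg).comp_stronglyMeasurable hg_meas)
  have hZ0 : ∀ ω, 0 ≤ Z ω := fun ω => mul_nonneg (hY0 ω) (Real.exp_pos _).le
  have hZb : ∀ᵐ ω ∂μ, Z ω ≤ C := by
    filter_upwards [hYb, hg0] with ω h1 h2
    simp only [Pi.zero_apply] at h2
    have he : Real.exp (-(g ω)) ≤ 1 := Real.exp_le_one_iff.mpr (by linarith)
    calc Z ω ≤ Y ω * 1 := mul_le_mul_of_nonneg_left he (hY0 ω)
    _ = Y ω := mul_one _
    _ ≤ C := h1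
  set h : Ω → ℝ := fun ω => Real.exp (ξk ω - (max (ξk ω) 0) ^ β) with hhdef
  have hh_meas : StronglyMeasurable[m] h :=
    Real.continuous_exp.comp_stronglyMeasurable
      (hadpk.sub (hcontmax.comp_stronglyMeasurable hadpk))
  have hh0 : ∀ ω, 0 ≤ h ω := fun ω => (Real.exp_pos _).le
  have hhb : ∀ ω, h ω ≤ Real.exp 1 :=
    fun ω => Real.exp_le_exp.mpr (aux_term_le_one hβ1 _)
  have hh_int : Integrable h μ :=
    (integrable_const (Real.exp 1)).mono' hh_meas.aestronglyMeasurable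
      (ae_of_all _ fun ω => by rw [Real.norm_of_nonneg (hh0 ω)]; exact hhb ω)
  have hY_int : Integrable Y μ :=
    (integrable_const C).mono' (hY.mono hlek).aestronglyMeasurable
      (by filter_upwards [hYb] with ω h1; rw [Real.norm_of_nonneg (hY0 ω)]; exact h1)
  have hZh_int : Integrable (Z * h) μ :=
    (integrable_const (C * Real.exp 1)).mono'
      (((hZ.mono hlek).mul hh_meas).aestronglyMeasurable)
      (by filter_upwards [hZb] with ω h1
          rw [Pi.mul_apply, Real.norm_of_nonneg (mul_nonneg (hZ0 ω) (hh0 ω))]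
          exact mul_le_mul h1 (hhb ω) (hh0 ω) hC)
  have hpull : μ[Z * h | mk] =ᵐ[μ] Z * μ[h | mk] :=
    condExp_mul_of_stronglyMeasurable_left hZ hZh_int hh_int
  have hcond0 : 0 ≤ᵐ[μ] μ[h | mk] := condExp_nonneg (ae_of_all _ hh0)
  -- conditional expectation bound
  have hR_int : Integrable (fun ω => 1 + ξk ω + (max (-(ξk ω)) 0) ^ β) μ :=
    ((integrable_const (1:ℝ)).add hξ_int).add hneg_int
  have hcond1 : μ[h | mk] ≤ᵐ[μ] μ[fun ω => 1 + ξk ω + (max (-(ξk ω)) 0) ^ β | mk] :=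
    condExp_mono hh_int hR_int (ae_of_all _ fun ω => aux_key_ineq hβ1 hβ2 (ξk ω))
  have hcond2 : μ[fun ω => 1 + ξk ω + (max (-(ξk ω)) 0) ^ β | mk]
      =ᵐ[μ] fun ω => 1 + g ω := by
    have h1 : μ[(fun ω => 1 + ξk ω) + fun ω => (max (-(ξk ω)) 0) ^ β | mk]
        =ᵐ[μ] μ[fun ω => 1 + ξk ω | mk] + μ[fun ω => (max (-(ξk ω)) 0) ^ β | mk] :=
      condExp_add ((integrable_const (1:ℝ)).add hξ_int) hneg_int mk
    have h2 : μ[(fun _ => (1:ℝ)) + ξk | mk] =ᵐ[μ] μ[fun _ => (1:ℝ) | mk] + μ[ξk | mk] :=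
      condExp_add (integrable_const (1:ℝ)) hξ_int mk
    have h3 : μ[fun _ => (1:ℝ) | mk] = fun _ => (1:ℝ) := condExp_const hlek 1
    filter_upwards [h1, h2, hmartk] with ω hω1 hω2 hω3
    have e1 : (fun ω => 1 + ξk ω + (max (-(ξk ω)) 0) ^ β)
        = (fun ω => 1 + ξk ω) + fun ω => (max (-(ξk ω)) 0) ^ β := rfl
    have e2 : (fun ω => 1 + ξk ω) = (fun _ => (1:ℝ)) + ξk := rfl
    rw [e1, hω1, Pi.add_apply, e2, hω2, Pi.add_apply, h3, hω3]
    simp [hgdef]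
  have hfin : (fun ω => Z ω * (μ[h | mk]) ω) ≤ᵐ[μ] Y := by
    filter_upwards [hcond1, hcond2, hcond0] with ω h1 h2 h3
    simp only [Pi.zero_apply] at h3
    have h4 : (μ[h | mk]) ω ≤ Real.exp (g ω) := by
      have := h2 ▸ (h1.trans_eq h2)
      have h5 : 1 + g ω ≤ Real.exp (g ω) := by
        have := Real.add_one_le_exp (g ω); linarith
      linarith [h1.trans_eq (by rw [h2])]
    calc Z ω * (μ[h | mk]) ω ≤ Z ω * Real.exp (g ω) :=
          mul_le_mul_of_nonneg_left h4 (hZ0 ω)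
    _ = Y ω * (Real.exp (-(g ω)) * Real.exp (g ω)) := by rw [hZdef]; ring
    _ = Y ω := by rw [← Real.exp_add, neg_add_cancel, Real.exp_zero, mul_one]
  have hZcond_int : Integrable (fun ω => Z ω * (μ[h | mk]) ω) μ :=
    hY_int.mono' ((hZ.mono hlek).mul (stronglyMeasurable_condExp.mono hlek)).aestronglyMeasurable
      (by filter_upwards [hfin, hcond0] with ω h1 h2
          simp only [Pi.zero_apply] at h2
          rw [Real.norm_of_nonneg (mul_nonneg (hZ0 ω) h2)]; exact h1)
  calc ∫ ω, Y ω * Real.exp (-(g ω)) * Real.exp (ξk ω - (max (ξk ω) 0) ^ β) ∂μ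
      = ∫ ω, (Z * h) ω ∂μ := rfl
    _ = ∫ ω, (μ[Z * h | mk]) ω ∂μ := (integral_condExp hlek).symm
    _ = ∫ ω, Z ω * (μ[h | mk]) ω ∂μ := integral_congr_ae hpull
    _ ≤ ∫ ω, Y ω ∂μ := integral_mono_ae hZcond_int hY_int hfin

/-- Supermartingale inequality: `E[exp(∑ (ξᵢ - (ξᵢ⁺)^β) - ∑ E[(ξᵢ⁻)^β | 𝔉_{i-1}])] ≤ 1`. -/
lemma aux_super {Ω : Type*} {m : MeasurableSpace Ω} {μ : Measure Ω} [IsProbabilityMeasure μ]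
    (𝔉 : ℕ → MeasurableSpace Ω) (hle : ∀ i, 𝔉 i ≤ m) (hmono : Monotone 𝔉)
    (ξ : ℕ → Ω → ℝ)
    (hadp : ∀ i, StronglyMeasurable[𝔉 i] (ξ i))
    (β : ℝ) (hβ1 : 1 < β) (hβ2 : β < 2)
    (hmom : ∀ i, Integrable (fun ω => |ξ i ω| ^ β) μ)
    (hmart : ∀ i : ℕ, 1 ≤ i → μ[ξ i | 𝔉 (i - 1)] =ᵐ[μ] 0)
    (n : ℕ) :
    ∫ ω, Real.exp ((∑ i ∈ Finset.Icc 1 n, (ξ i ω - (max (ξ i ω) 0) ^ β))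
        - ∑ i ∈ Finset.Icc 1 n, (μ[fun ω' => (max (-(ξ i ω')) 0) ^ β | 𝔉 (i - 1)]) ω) ∂μ ≤ 1 := by
  have hβ0 : (0:ℝ) < β := by linarith
  have hcontmax : Continuous (fun y : ℝ => (max y 0) ^ β) :=
    (Real.continuous_rpow_const hβ0.le).comp (continuous_id.max continuous_const)
  induction n with
  | zero =>
    rw [show Finset.Icc 1 0 = (∅ : Finset ℕ) from Finset.Icc_eq_empty (by omega)]
    simp
  | succ n ih =>
    have hTle : ∀ i (ω : Ω), ξ i ω - (max (ξ i ω) 0) ^ β ≤ 1 :=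
      fun i ω => aux_term_le_one hβ1 _
    set Y : Ω → ℝ := fun ω =>
      Real.exp ((∑ i ∈ Finset.Icc 1 n, (ξ i ω - (max (ξ i ω) 0) ^ β))
        - ∑ i ∈ Finset.Icc 1 n, (μ[fun ω' => (max (-(ξ i ω')) 0) ^ β | 𝔉 (i - 1)]) ω)
      with hYdef
    have hA : StronglyMeasurable[𝔉 n]
        (fun ω => ∑ i ∈ Finset.Icc 1 n, (ξ i ω - (max (ξ i ω) 0) ^ β)) := by
      apply Finset.stronglyMeasurable_fun_sum
      intro i hi
      have hin : i ≤ n := (Finset.mem_Icc.mp hi).2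
      exact ((hadp i).mono (hmono hin)).sub
        (hcontmax.comp_stronglyMeasurable ((hadp i).mono (hmono hin)))
    have hB : StronglyMeasurable[𝔉 n]
        (fun ω => ∑ i ∈ Finset.Icc 1 n,
          (μ[fun ω' => (max (-(ξ i ω')) 0) ^ β | 𝔉 (i - 1)]) ω) := by
      apply Finset.stronglyMeasurable_fun_sum
      intro i hi
      have hin : i - 1 ≤ n := by
        have := (Finset.mem_Icc.mp hi).2; omega
      exact stronglyMeasurable_condExp.mono (hmono hin)
    have hYmeas : StronglyMeasurable[𝔉 n] Y :=
      Real.continuous_exp.comp_stronglyMeasurable (hA.sub hB)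
    have hY0 : ∀ ω, 0 ≤ Y ω := fun ω => (Real.exp_pos _).le
    have hgall : ∀ᵐ ω ∂μ, ∀ i : ℕ,
        0 ≤ (μ[fun ω' => (max (-(ξ i ω')) 0) ^ β | 𝔉 (i - 1)]) ω := by
      rw [MeasureTheory.ae_all_iff]
      intro i
      exact (condExp_nonneg (ae_of_all _ fun ω =>
        Real.rpow_nonneg (le_max_right _ _) β)).mono fun ω h => by simpa using h
    have hYb : ∀ᵐ ω ∂μ, Y ω ≤ Real.exp n := by
      filter_upwards [hgall] with ω hg
      rw [hYdef]
      apply Real.exp_le_exp.mpr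
      have h1 : ∑ i ∈ Finset.Icc 1 n, (ξ i ω - (max (ξ i ω) 0) ^ β)
          ≤ ∑ _i ∈ Finset.Icc 1 n, (1:ℝ) :=
        Finset.sum_le_sum fun i _ => hTle i ω
      have h2 : ∑ _i ∈ Finset.Icc 1 n, (1:ℝ) = n := by
        rw [Finset.sum_const, Nat.card_Icc]
        simp
      have h3 : 0 ≤ ∑ i ∈ Finset.Icc 1 n,
          (μ[fun ω' => (max (-(ξ i ω')) 0) ^ β | 𝔉 (i - 1)]) ω :=
        Finset.sum_nonneg fun i _ => hg i
      linarith
    have hmart' : μ[ξ (n+1) | 𝔉 n] =ᵐ[μ] 0 := by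
      simpa using hmart (n+1) (by omega)
    have hstep := aux_step (hle n) hβ1 hβ2 (ξ (n+1))
      ((hadp (n+1)).mono (hle (n+1))) (hmom (n+1)) hmart'
      Y hYmeas hY0 (Real.exp n) (Real.exp_pos _).le hYb
    have hsplit : ∀ ω, Real.exp ((∑ i ∈ Finset.Icc 1 (n+1), (ξ i ω - (max (ξ i ω) 0) ^ β))
          - ∑ i ∈ Finset.Icc 1 (n+1), (μ[fun ω' => (max (-(ξ i ω')) 0) ^ β | 𝔉 (i - 1)]) ω)
        = Y ω * Real.exp (-(μ[fun ω' => (max (-(ξ (n+1) ω')) 0) ^ β | 𝔉 n]) ω)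
          * Real.exp (ξ (n+1) ω - (max (ξ (n+1) ω) 0) ^ β) := by
      intro ω
      rw [Finset.sum_Icc_succ_top (by omega : 1 ≤ n+1),
        Finset.sum_Icc_succ_top (by omega : 1 ≤ n+1), hYdef]
      simp only [Nat.add_sub_cancel]
      rw [← Real.exp_add, ← Real.exp_add]
      congr 1
      ring
    calc ∫ ω, Real.exp ((∑ i ∈ Finset.Icc 1 (n+1), (ξ i ω - (max (ξ i ω) 0) ^ β))
          - ∑ i ∈ Finset.Icc 1 (n+1),
            (μ[fun ω' => (max (-(ξ i ω')) 0) ^ β | 𝔉 (i - 1)]) ω) ∂μ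
        = ∫ ω, Y ω * Real.exp (-(μ[fun ω' => (max (-(ξ (n+1) ω')) 0) ^ β | 𝔉 n]) ω)
            * Real.exp (ξ (n+1) ω - (max (ξ (n+1) ω) 0) ^ β) ∂μ :=
          integral_congr_ae (ae_of_all _ hsplit)
      _ ≤ ∫ ω, Y ω ∂μ := hstep
      _ ≤ 1 := ih

theorem stmt_14 {Ω : Type*} {m : MeasurableSpace Ω} {μ : Measure Ω} [IsProbabilityMeasure μ]
    (𝔉 : ℕ → MeasurableSpace Ω) (hle : ∀ i, 𝔉 i ≤ m) (hmono : Monotone 𝔉)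
    (ξ : ℕ → Ω → ℝ)
    (hadp : ∀ i, StronglyMeasurable[𝔉 i] (ξ i))
    (β : ℝ) (hβ1 : 1 < β) (hβ2 : β < 2)
    (hmom : ∀ i, Integrable (fun ω => |ξ i ω| ^ β) μ)
    (hmart : ∀ i : ℕ, 1 ≤ i → μ[ξ i | 𝔉 (i - 1)] =ᵐ[μ] 0)
    (n : ℕ) (x p : ℝ) (hx : 0 < x) (hp : 1 < p)
    (S G : Ω → ℝ)
    (hS : S = fun ω => ∑ i ∈ Finset.Icc 1 n, ξ i ω)
    (hG : G = fun ω =>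
      (∑ i ∈ Finset.Icc 1 n, (max (ξ i ω) 0) ^ β)
        + ∑ i ∈ Finset.Icc 1 n, (μ[fun ω' => (max (-(ξ i ω')) 0) ^ β | 𝔉 (i - 1)]) ω) :
    (μ {ω | x * G ω ≤ S ω}).toReal ≤
      (∫ ω, Real.exp ((p - 1) * (x / β) ^ (β / (β - 1)) * (1 - β) * G ω) ∂μ) ^ (1 / p) := by
  have hβ0 : (0:ℝ) < β := by linarith
  have hβm1 : (0:ℝ) < β - 1 := by linarith
  have hp0 : (0:ℝ) < p := by linarith
  have hxβ : 0 < x / β := div_pos hx hβ0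
  have hcontmax : Continuous (fun y : ℝ => (max y 0) ^ β) :=
    (Real.continuous_rpow_const hβ0.le).comp (continuous_id.max continuous_const)
  set L : ℝ := (x / β) ^ ((β - 1)⁻¹) with hLdef
  have hL0 : 0 < L := Real.rpow_pos_of_pos hxβ _
  set K : ℝ := (x / β) ^ (β / (β - 1)) with hKdef
  have hK0 : 0 < K := Real.rpow_pos_of_pos hxβ _
  have hLβ : L ^ β = K := by
    rw [hLdef, hKdef, ← Real.rpow_mul hxβ.le, inv_mul_eq_div]
  have hLx : L * x = β * K := by
    have hx' : x = (x / β) ^ (1:ℝ) * β := by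
      rw [Real.rpow_one]; field_simp
    calc L * x = (x / β) ^ ((β - 1)⁻¹) * ((x / β) ^ (1:ℝ) * β) := by rw [hLdef, ← hx']
      _ = (x / β) ^ ((β - 1)⁻¹ + 1) * β := by rw [Real.rpow_add hxβ]; ring
      _ = K * β := by
          rw [hKdef]
          congr 2
          field_simp
          ring
      _ = β * K := mul_comm _ _
  have hKx : K * (1 - β) = K - L * x := by rw [hLx]; ring
  -- scaled martingale differences
  have hadp' : ∀ i, StronglyMeasurable[𝔉 i] (fun ω => L * ξ i ω) :=
    fun i => (hadp i).const_mul L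
  have hmom' : ∀ i, Integrable (fun ω => |L * ξ i ω| ^ β) μ := fun i => by
    have heq : (fun ω => |L * ξ i ω| ^ β) = fun ω => |L| ^ β * |ξ i ω| ^ β :=
      funext fun ω => by rw [abs_mul, Real.mul_rpow (abs_nonneg _) (abs_nonneg _)]
    rw [heq]
    exact (hmom i).const_mul _
  have hmart' : ∀ i : ℕ, 1 ≤ i → μ[fun ω => L * ξ i ω | 𝔉 (i - 1)] =ᵐ[μ] 0 := by
    intro i hi
    have h1 : (fun ω => L * ξ i ω) = L • ξ i := rfl
    rw [h1]
    filter_upwards [condExp_smul (m := 𝔉 (i - 1)) (μ := μ) L (ξ i), hmart i hi]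
      with ω h2 h3
    rw [h2, Pi.smul_apply, h3]
    simp
  have hsuper := aux_super 𝔉 hle hmono (fun i ω => L * ξ i ω) hadp' β hβ1 hβ2
    hmom' hmart' n
  set Φ : Ω → ℝ := fun ω =>
    (∑ i ∈ Finset.Icc 1 n, (L * ξ i ω - (max (L * ξ i ω) 0) ^ β))
      - ∑ i ∈ Finset.Icc 1 n, (μ[fun ω' => (max (-(L * ξ i ω')) 0) ^ β | 𝔉 (i - 1)]) ω
    with hΦ
  have hsuper' : ∫ ω, Real.exp (Φ ω) ∂μ ≤ 1 := by
    simp only [hΦ]; exact hsuper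
  -- conjugate exponent
  set q : ℝ := p / (p - 1) with hqdef
  have hpq : p.HolderConjugate q := (Real.holderConjugate_iff_eq_conjExponent hp).mpr rfl
  have hq1 : 1 < q := hpq.symm.lt
  have hq0 : (0:ℝ) < q := by linarith
  set u : Ω → ℝ := fun ω => Real.exp (Φ ω / q) with hudef
  set v : Ω → ℝ := fun ω => Real.exp ((p - 1) * K * (1 - β) * G ω / p) with hvdef
  -- measurability
  have hSmeas : StronglyMeasurable[m] S := by
    rw [hS]
    exact Finset.stronglyMeasurable_fun_sum _ fun i _ => (hadp i).mono (hle i)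
  have hGmeas : StronglyMeasurable[m] G := by
    rw [hG]
    apply StronglyMeasurable.add
    · exact Finset.stronglyMeasurable_fun_sum _ fun i _ =>
        hcontmax.comp_stronglyMeasurable ((hadp i).mono (hle i))
    · exact Finset.stronglyMeasurable_fun_sum _ fun i _ =>
        stronglyMeasurable_condExp.mono (hle _)
  have hΦmeas : StronglyMeasurable[m] Φ := by
    rw [hΦ]
    apply StronglyMeasurable.sub
    · exact Finset.stronglyMeasurable_fun_sum _ fun i _ =>
        (((hadp i).mono (hle i)).const_mul L).sub
          (hcontmax.comp_stronglyMeasurable (((hadp i).mono (hle i)).const_mul L))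
    · exact Finset.stronglyMeasurable_fun_sum _ fun i _ =>
        stronglyMeasurable_condExp.mono (hle _)
  have humeas : StronglyMeasurable[m] u := by
    rw [hudef]
    exact Real.continuous_exp.comp_stronglyMeasurable (hΦmeas.mul stronglyMeasurable_const)
  have hvmeas : StronglyMeasurable[m] v := by
    rw [hvdef]
    exact Real.continuous_exp.comp_stronglyMeasurable
      (((hGmeas.const_mul _).mul stronglyMeasurable_const))
  set A : Set Ω := {ω | x * G ω ≤ S ω} with hAdef
  have hA : MeasurableSet A :=
    measurableSet_le (measurable_const.mul hGmeas.measurable) hSmeas.measurable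
  -- a.e. facts
  have hgall : ∀ᵐ ω ∂μ, ∀ i : ℕ,
      0 ≤ (μ[fun ω' => (max (-(ξ i ω')) 0) ^ β | 𝔉 (i - 1)]) ω := by
    rw [MeasureTheory.ae_all_iff]
    intro i
    exact (condExp_nonneg (ae_of_all _ fun ω =>
      Real.rpow_nonneg (le_max_right _ _) β)).mono fun ω h => by simpa using h
  have hgallL : ∀ᵐ ω ∂μ, ∀ i : ℕ,
      0 ≤ (μ[fun ω' => (max (-(L * ξ i ω')) 0) ^ β | 𝔉 (i - 1)]) ω := by
    rw [MeasureTheory.ae_all_iff]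
    intro i
    exact (condExp_nonneg (ae_of_all _ fun ω =>
      Real.rpow_nonneg (le_max_right _ _) β)).mono fun ω h => by simpa using h
  have hG0 : ∀ᵐ ω ∂μ, 0 ≤ G ω := by
    filter_upwards [hgall] with ω hg
    rw [hG]
    exact add_nonneg
      (Finset.sum_nonneg fun i _ => Real.rpow_nonneg (le_max_right _ _) β)
      (Finset.sum_nonneg fun i _ => hg i)
  -- pointwise scaling identities
  have hmaxmul : ∀ a : ℝ, max (L * a) 0 = L * max a 0 := by
    intro a
    rcases le_total a 0 with h | h
    · rw [max_eq_right h, max_eq_right (by nlinarith : L * a ≤ 0), mul_zero]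
    · rw [max_eq_left h, max_eq_left (by nlinarith : 0 ≤ L * a)]
  have hpowmul : ∀ a : ℝ, (max (L * a) 0) ^ β = K * (max a 0) ^ β := by
    intro a
    rw [hmaxmul a, Real.mul_rpow hL0.le (le_max_right _ _), hLβ]
  have hpowmulneg : ∀ a : ℝ, (max (-(L * a)) 0) ^ β = K * (max (-a) 0) ^ β := by
    intro a
    rw [show -(L * a) = L * (-a) by ring, hpowmul (-a)]
  have hcond : ∀ᵐ ω ∂μ, ∀ i : ℕ,
      (μ[fun ω' => (max (-(L * ξ i ω')) 0) ^ β | 𝔉 (i - 1)]) ω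
        = K * (μ[fun ω' => (max (-(ξ i ω')) 0) ^ β | 𝔉 (i - 1)]) ω := by
    rw [MeasureTheory.ae_all_iff]
    intro i
    have heq : (fun ω' => (max (-(L * ξ i ω')) 0) ^ β)
        = K • fun ω' => (max (-(ξ i ω')) 0) ^ β := funext fun ω' => by
      rw [hpowmulneg]; rfl
    rw [heq]
    filter_upwards [condExp_smul (m := 𝔉 (i - 1)) (μ := μ) K
      (fun ω' => (max (-(ξ i ω')) 0) ^ β)] with ω h
    rw [h]
    simp
  have hΦeq : ∀ᵐ ω ∂μ, Φ ω = L * S ω - K * G ω := by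
    filter_upwards [hcond] with ω hc
    have e1 : ∑ i ∈ Finset.Icc 1 n, (L * ξ i ω - (max (L * ξ i ω) 0) ^ β)
        = ∑ i ∈ Finset.Icc 1 n, (L * ξ i ω - K * (max (ξ i ω) 0) ^ β) :=
      Finset.sum_congr rfl fun i _ => by rw [hpowmul]
    have e2 : ∑ i ∈ Finset.Icc 1 n,
          (μ[fun ω' => (max (-(L * ξ i ω')) 0) ^ β | 𝔉 (i - 1)]) ω
        = ∑ i ∈ Finset.Icc 1 n,
          K * (μ[fun ω' => (max (-(ξ i ω')) 0) ^ β | 𝔉 (i - 1)]) ω :=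
      Finset.sum_congr rfl fun i _ => hc i
    rw [hΦ]
    simp only []
    rw [e1, e2, hS, hG]
    simp only []
    rw [Finset.sum_sub_distrib, ← Finset.mul_sum, ← Finset.mul_sum, ← Finset.mul_sum]
    ring
  have hΦb : ∀ᵐ ω ∂μ, Φ ω ≤ n := by
    filter_upwards [hgallL] with ω hg
    rw [hΦ]
    simp only []
    have h1 : ∑ i ∈ Finset.Icc 1 n, (L * ξ i ω - (max (L * ξ i ω) 0) ^ β)
        ≤ ∑ _i ∈ Finset.Icc 1 n, (1:ℝ) :=
      Finset.sum_le_sum fun i _ => aux_term_le_one hβ1 _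
    have h2 : ∑ _i ∈ Finset.Icc 1 n, (1:ℝ) = n := by
      rw [Finset.sum_const, Nat.card_Icc]; simp
    have h3 : 0 ≤ ∑ i ∈ Finset.Icc 1 n,
        (μ[fun ω' => (max (-(L * ξ i ω')) 0) ^ β | 𝔉 (i - 1)]) ω :=
      Finset.sum_nonneg fun i _ => hg i
    linarith
  -- bounds on u, v
  have hu0 : ∀ ω, 0 ≤ u ω := fun ω => (Real.exp_pos _).le
  have hv0 : ∀ ω, 0 ≤ v ω := fun ω => (Real.exp_pos _).le
  have hub : ∀ᵐ ω ∂μ, u ω ≤ Real.exp (n / q) := by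
    filter_upwards [hΦb] with ω h
    rw [hudef]
    exact Real.exp_le_exp.mpr (by gcongr)
  have hvb : ∀ᵐ ω ∂μ, v ω ≤ 1 := by
    filter_upwards [hG0] with ω h
    rw [hvdef]
    apply Real.exp_le_one_iff.mpr
    have h2 : 0 ≤ (p - 1) * K := mul_nonneg (by linarith) hK0.le
    have h3 : (p - 1) * K * (1 - β) * G ω ≤ 0 := by nlinarith [mul_nonneg h2 h]
    exact div_nonpos_iff.mpr (Or.inr ⟨h3, hp0.le⟩)
  -- integrability / MemLp
  have hmemu : MemLp u (ENNReal.ofReal q) μ :=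
    MemLp.of_bound humeas.aestronglyMeasurable (Real.exp (n / q))
      (by filter_upwards [hub] with ω h
          rw [Real.norm_of_nonneg (hu0 ω)]; exact h)
  have hmemv : MemLp v (ENNReal.ofReal p) μ :=
    MemLp.of_bound hvmeas.aestronglyMeasurable 1
      (by filter_upwards [hvb] with ω h
          rw [Real.norm_of_nonneg (hv0 ω)]; exact h)
  have hind_int : Integrable (A.indicator fun _ => (1:ℝ)) μ :=
    (integrable_const (1:ℝ)).indicator hA
  have huv_int : Integrable (fun ω => u ω * v ω) μ :=
    (integrable_const (Real.exp (n / q))).mono'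
      ((humeas.mul hvmeas).aestronglyMeasurable)
      (by filter_upwards [hub, hvb] with ω h1 h2
          rw [Real.norm_of_nonneg (mul_nonneg (hu0 ω) (hv0 ω))]
          calc u ω * v ω ≤ u ω * 1 := mul_le_mul_of_nonneg_left h2 (hu0 ω)
            _ = u ω := mul_one _
            _ ≤ Real.exp (n / q) := h1)
  -- indicator bound
  have hqratio : (p - 1) / p = 1 / q := by
    rw [hqdef]; field_simp
  have hIndLe : ∀ᵐ ω ∂μ, A.indicator (fun _ => (1:ℝ)) ω ≤ u ω * v ω := by
    filter_upwards [hΦeq, hG0] with ω h1 h2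
    by_cases hω : ω ∈ A
    · rw [Set.indicator_of_mem hω]
      have huv : u ω * v ω
          = Real.exp (Φ ω / q + (p - 1) * K * (1 - β) * G ω / p) := by
        rw [hudef, hvdef]
        exact (Real.exp_add _ _).symm
      have harg : Φ ω / q + (p - 1) * K * (1 - β) * G ω / p
          = L * (S ω - x * G ω) / q := by
        rw [h1]
        have e3 : (p - 1) * K * (1 - β) * G ω / p = K * (1 - β) * G ω / q := by
          have e4 : (p - 1) * K * (1 - β) * G ω / p
              = K * (1 - β) * G ω * ((p - 1) / p) := by ring
          rw [e4, hqratio]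
          ring
        rw [e3, hKx, ← add_div]
        congr 1
        ring
      rw [huv, harg]
      apply Real.one_le_exp
      have hω' : x * G ω ≤ S ω := hω
      apply div_nonneg _ hq0.le
      have : 0 ≤ S ω - x * G ω := by linarith
      exact mul_nonneg hL0.le this
    · rw [Set.indicator_of_notMem hω]
      exact mul_nonneg (hu0 ω) (hv0 ω)
  -- Hölder
  have hHolder : ∫ ω, u ω * v ω ∂μ
      ≤ (∫ ω, u ω ^ q ∂μ) ^ (1 / q) * (∫ ω, v ω ^ p ∂μ) ^ (1 / p) :=
    integral_mul_le_Lp_mul_Lq_of_nonneg hpq.symm (ae_of_all _ hu0) (ae_of_all _ hv0)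
      hmemu hmemv
  have hu_pow : ∀ ω, u ω ^ q = Real.exp (Φ ω) := fun ω => by
    rw [hudef]
    simp only []
    rw [← Real.exp_mul, div_mul_cancel₀ _ hq0.ne']
  have hv_pow : ∀ ω, v ω ^ p = Real.exp ((p - 1) * K * (1 - β) * G ω) := fun ω => by
    rw [hvdef]
    simp only []
    rw [← Real.exp_mul, div_mul_cancel₀ _ hp0.ne']
  have hIu : ∫ ω, u ω ^ q ∂μ ≤ 1 := by
    rw [integral_congr_ae (ae_of_all _ hu_pow)]
    exact hsuper'
  have hIu1 : (∫ ω, u ω ^ q ∂μ) ^ (1 / q) ≤ 1 :=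
    Real.rpow_le_one (integral_nonneg fun ω => Real.rpow_nonneg (hu0 ω) q) hIu
      (by positivity)
  have hvint_nonneg : 0 ≤ ∫ ω, v ω ^ p ∂μ :=
    integral_nonneg fun ω => Real.rpow_nonneg (hv0 ω) p
  calc (μ A).toReal
      = ∫ ω, A.indicator (fun _ => (1:ℝ)) ω ∂μ := by
        rw [integral_indicator_const (1:ℝ) hA]; simp [measureReal_def]
    _ ≤ ∫ ω, u ω * v ω ∂μ := integral_mono_ae hind_int huv_int hIndLe
    _ ≤ (∫ ω, u ω ^ q ∂μ) ^ (1 / q) * (∫ ω, v ω ^ p ∂μ) ^ (1 / p) := hHolder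
    _ ≤ 1 * (∫ ω, v ω ^ p ∂μ) ^ (1 / p) :=
        mul_le_mul_of_nonneg_right hIu1 (Real.rpow_nonneg hvint_nonneg _)
    _ = (∫ ω, v ω ^ p ∂μ) ^ (1 / p) := one_mul _
    _ = (∫ ω, Real.exp ((p - 1) * K * (1 - β) * G ω) ∂μ) ^ (1 / p) := by
        rw [integral_congr_ae (ae_of_all _ hv_pow)]
end
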